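/- arXiv:2512.11386 — 9 statements merged into one kernel-verified Lean document; each statement's English description precedes it below -/
import Mathlib

section
/- Let M be a pointed metric space and let K ⊆ F(M) be bounded. Then K is relatively norm-compact if and only if for every ε > 0 there exists a finite subset F ⊆ M such that K ⊆ F(F) + ε B_{F(M)}. -/
open Metric Set Filter Pointwise

noncomputable section

/-- Data witnessing that the Banach space `F`, together with the map `toFun : M → F`
(playing the role of `δ`), is (isometrically) the Lipschitz free space over the
pointed metric space `M` with base point `base`:
`toFun` sends the base point to `0`, is an isometry, has dense linear span, and every
Lipschitz function on `M` vanishing at `base` extends to a bounded linear functional. -/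
structure FreeSpaceData (M : Type*) [MetricSpace M] (base : M)
    (F : Type*) [NormedAddCommGroup F] [NormedSpace ℝ F] where
  toFun : M → F
  map_base : toFun base = 0
  norm_sub : ∀ x y : M, ‖toFun x - toFun y‖ = dist x y
  dense_span : (Submodule.span ℝ (Set.range toFun)).topologicalClosure = ⊤
  extend : ∀ (K : NNReal) (f : M → ℝ), LipschitzWith K f → f base = 0 →
      ∃ φ : F →L[ℝ] ℝ, ‖φ‖ ≤ K ∧ ∀ x, φ (toFun x) = f x

namespace FreeSpaceData

variable {M : Type*} [MetricSpace M] {base : M}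
  {F : Type*} [NormedAddCommGroup F] [NormedSpace ℝ F]

/-- `F(S)`: the closed linear span of `δ(S ∪ {base})` inside the free space. -/
def freeSub (h : FreeSpaceData M base F) (S : Set M) : Submodule ℝ F :=
  (Submodule.span ℝ (h.toFun '' (S ∪ {base}))).topologicalClosure

/-- A bounded set `W ⊆ F(M)` is uniformly regular if for every `ε > 0` and every open
`U ⊆ M` there is a compact `K ⊆ U` with `W ⊆ F(K ∪ (M \ U)) + ε B_{F(M)}`. -/
def UniformlyRegular (h : FreeSpaceData M base F) (W : Set F) : Prop :=
  Bornology.IsBounded W ∧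
    ∀ ε : ℝ, 0 < ε → ∀ U : Set M, IsOpen U →
      ∃ K : Set M, K ⊆ U ∧ IsCompact K ∧
        W ⊆ ↑(h.freeSub (K ∪ Uᶜ)) + Metric.closedBall (0 : F) ε

/-- The elementary molecule `m_{xy} = (δ x - δ y)/d(x,y)`. -/
def molecule (h : FreeSpaceData M base F) (x y : M) : F :=
  (dist x y)⁻¹ • (h.toFun x - h.toFun y)

/-- The support of `γ ∈ F(M)`: the smallest closed `S ⊆ M` with `γ ∈ F(S)`. -/
def support (h : FreeSpaceData M base F) (γ : F) : Set M :=
  ⋂₀ {S : Set M | IsClosed S ∧ γ ∈ h.freeSub S}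

end FreeSpaceData

/-- A bounded set `W` is a V*-set if `sup_{w ∈ W} |x_n*(w)| → 0` for every weakly
unconditionally Cauchy series `∑ x_n*` in the dual. -/
def IsVStarSet {F : Type*} [NormedAddCommGroup F] [NormedSpace ℝ F] (W : Set F) : Prop :=
  Bornology.IsBounded W ∧
    ∀ φ : ℕ → (F →L[ℝ] ℝ), (∀ v : F, Summable fun n => |φ n v|) →
      Filter.Tendsto (fun n => ⨆ w : W, |φ n (w : F)|) Filter.atTop (nhds 0)

/-- A set is relatively weakly compact if its closure in the weak topology is compact. -/
def RelWeaklyCompact (F : Type*) [NormedAddCommGroup F] [NormedSpace ℝ F]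
    (W : Set F) : Prop :=
  IsCompact (closure (toWeakSpace ℝ F '' W))

/-- A set `W` is weakly precompact if every sequence in `W` has a weakly Cauchy
subsequence. -/
def WeaklyPrecompact {F : Type*} [NormedAddCommGroup F] [NormedSpace ℝ F]
    (W : Set F) : Prop :=
  ∀ u : ℕ → F, (∀ n, u n ∈ W) →
    ∃ s : ℕ → ℕ, StrictMono s ∧ ∀ φ : F →L[ℝ] ℝ, ∃ l : ℝ,
      Filter.Tendsto (fun k => φ (u (s k))) Filter.atTop (nhds l)

/-- A metric space is scattered if every nonempty closed subset has an isolated point. -/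
def Scattered (M : Type*) [MetricSpace M] : Prop :=
  ∀ S : Set M, IsClosed S → S.Nonempty →
    ∃ x ∈ S, ∃ ε : ℝ, 0 < ε ∧ S ∩ Metric.ball x ε = {x}

/-- a bounded set `K ⊆ F(M)` is relatively norm-compact iff for every
`ε > 0` there is a finite `S ⊆ M` with `K ⊆ F(S) + ε B_{F(M)}`. -/
theorem stmt_4 {M : Type*} [MetricSpace M] (base : M)
    {F : Type*} [NormedAddCommGroup F] [NormedSpace ℝ F] [CompleteSpace F]
    (h : FreeSpaceData M base F) (K : Set F) (hK : Bornology.IsBounded K) :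
    IsCompact (closure K) ↔
      ∀ ε : ℝ, 0 < ε → ∃ S : Set M, S.Finite ∧
        K ⊆ ↑(h.freeSub S) + Metric.closedBall (0 : F) ε := by
  constructor
  · intro hc ε hε
    have htb : TotallyBounded K := (hc.totallyBounded).subset subset_closure
    obtain ⟨t, htfin, htcov⟩ := totallyBounded_iff.mp htb (ε/2) (by linarith)
    -- For every y : F, find finite S and v ∈ span (toFun '' S) with ‖y - v‖ < ε/2
    have key : ∀ y : F, ∃ S : Set M, S.Finite ∧ ∃ v ∈ Submodule.span ℝ (h.toFun '' S),
        ‖y - v‖ < ε/2 := by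
      intro y
      have hd : Dense ((Submodule.span ℝ (Set.range h.toFun) : Submodule ℝ F) : Set F) :=
        Submodule.dense_iff_topologicalClosure_eq_top.mpr h.dense_span
      obtain ⟨w, hw, hwy⟩ := Metric.mem_closure_iff.mp (hd y) (ε/2) (by linarith)
      obtain ⟨T, hTsub, hwT⟩ := Submodule.mem_span_finite_of_mem_span hw
      -- choose preimages
      have : ∀ e : T, ∃ m : M, h.toFun m = e := fun e => hTsub e.2
      choose g hg using this
      refine ⟨Set.range g, Set.finite_range g, w, ?_, by
        simpa [dist_eq_norm, norm_sub_rev] using hwy⟩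
      refine Submodule.span_mono ?_ hwT
      rintro x hx
      exact ⟨g ⟨x, hx⟩, ⟨⟨x, hx⟩, rfl⟩, hg ⟨x, hx⟩⟩
    choose Sf hSfin v hv hnorm using key
    refine ⟨⋃ y ∈ t, Sf y, htfin.biUnion (fun y _ => hSfin y), ?_⟩
    intro k hk
    obtain ⟨y, hyt, hky⟩ := Set.mem_iUnion₂.mp (htcov hk)
    refine Set.mem_add.mpr ⟨v y, ?_, k - v y, ?_, by abel⟩
    · apply Submodule.le_topologicalClosure
      refine Submodule.span_mono ?_ (hv y)
      apply Set.image_mono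
      exact (Set.subset_biUnion_of_mem hyt).trans Set.subset_union_left
    · rw [Metric.mem_closedBall, dist_zero_right]
      calc ‖k - v y‖ ≤ ‖k - y‖ + ‖y - v y‖ := by
            have := norm_add_le (k - y) (y - v y); simpa using this
        _ ≤ ε := by
            have h1 : ‖k - y‖ < ε/2 := by simpa [dist_eq_norm] using hky
            have h2 := hnorm y; linarith
  · intro H
    have htb : TotallyBounded K := by
      rw [totallyBounded_iff]
      intro δ hδ
      obtain ⟨S, hSfin, hsub⟩ := H (δ/2) (by linarith)
      set V : Submodule ℝ F := Submodule.span ℝ (h.toFun '' (S ∪ {base})) with hV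
      haveI : FiniteDimensional ℝ V :=
        FiniteDimensional.span_of_finite ℝ ((hSfin.union (Set.finite_singleton base)).image _)
      have hVclosed : IsClosed (V : Set F) := Submodule.closed_of_finiteDimensional V
      have hfs : h.freeSub S = V := IsClosed.submodule_topologicalClosure_eq hVclosed
      obtain ⟨R, hR⟩ := hK.subset_closedBall 0
      set C : Set F := Subtype.val '' (Metric.closedBall (0 : V) (R + δ/2)) with hC
      have hCcompact : IsCompact C :=
        (isCompact_closedBall (0 : V) (R + δ/2)).image continuous_subtype_val
      obtain ⟨t, htfin, htcov⟩ := totallyBounded_iff.mp hCcompact.totallyBounded (δ/2)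
        (by linarith)
      refine ⟨t, htfin, ?_⟩
      intro k hk
      obtain ⟨vv, hvv, b, hb, hkeq⟩ := Set.mem_add.mp (hsub hk)
      rw [hfs] at hvv
      have hbn : ‖b‖ ≤ δ/2 := by simpa [dist_zero_right] using hb
      have hkn : ‖k‖ ≤ R := by
        have := hR hk; simpa [dist_zero_right] using this
      have hvn : ‖vv‖ ≤ R + δ/2 := by
        have : vv = k - b := by rw [← hkeq]; abel
        rw [this]
        calc ‖k - b‖ ≤ ‖k‖ + ‖b‖ := norm_sub_le _ _
          _ ≤ R + δ/2 := by linarith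
      have hvC : vv ∈ C := ⟨⟨vv, hvv⟩, by
        simpa [Metric.mem_closedBall, dist_zero_right] using hvn, rfl⟩
      obtain ⟨y, hyt, hvy⟩ := Set.mem_iUnion₂.mp (htcov hvC)
      refine Set.mem_iUnion₂.mpr ⟨y, hyt, ?_⟩
      rw [Metric.mem_ball]
      calc dist k y ≤ dist k vv + dist vv y := dist_triangle _ _ _
        _ < δ := by
          have h1 : dist k vv ≤ δ/2 := by
            rw [dist_eq_norm, ← hkeq]
            simpa using hbn
          have h2 : dist vv y < δ/2 := Metric.mem_ball.mp hvy
          linarith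
    exact TotallyBounded.isCompact_of_isClosed htb.closure isClosed_closure
end
end

section
/- Let M be a pointed metric space, U ⊆ M an open set, ε ∈ (0,1), n a positive integer, and γ = (1/n) ∑_{i=1}^n m_{u_i v_i} ∈ F(M) where u_i ≠ v_i ∈ M for each i. If dist(γ, F(M \ U)) > ε, then the number of indices i ∈ {1,…,n} such that B(u_i, r_i) ⊆ U or B(v_i, r_i) ⊆ U is strictly greater than nε/2, where r_i = (ε/8)·d(u_i, v_i) and B(p, r) = {x ∈ M : d(x,p) ≤ r} denotes the closed ball. -/
open Metric Set Filter Pointwise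

noncomputable section

/-- if `γ = (1/n) ∑ m_{u_i v_i}` satisfies `dist(γ, F(M \ U)) > ε`, then
strictly more than `nε/2` of the indices `i` satisfy
`B(u_i, r_i) ⊆ U` or `B(v_i, r_i) ⊆ U`, where `r_i = (ε/8) d(u_i, v_i)`. -/
theorem stmt_5 {M : Type*} [MetricSpace M] (base : M)
    {F : Type*} [NormedAddCommGroup F] [NormedSpace ℝ F] [CompleteSpace F]
    (h : FreeSpaceData M base F)
    (U : Set M) (hU : IsOpen U) (ε : ℝ) (hε : ε ∈ Set.Ioo (0 : ℝ) 1)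
    (n : ℕ) (hn : 0 < n) (u v : Fin n → M) (huv : ∀ i, u i ≠ v i)
    (γ : F) (hγ : γ = (n : ℝ)⁻¹ • ∑ i, h.molecule (u i) (v i))
    (hdist : ε < Metric.infDist γ ↑(h.freeSub Uᶜ)) :
    (n : ℝ) * ε / 2 <
      ({i : Fin n | Metric.closedBall (u i) (ε / 8 * dist (u i) (v i)) ⊆ U ∨
          Metric.closedBall (v i) (ε / 8 * dist (u i) (v i)) ⊆ U} : Set (Fin n)).ncard := by
  classical
  obtain ⟨hε0, hε1⟩ := hε
  set P : Fin n → Prop := fun i =>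
    Metric.closedBall (u i) (ε / 8 * dist (u i) (v i)) ⊆ U ∨
      Metric.closedBall (v i) (ε / 8 * dist (u i) (v i)) ⊆ U with hP
  set G : Finset (Fin n) := Finset.univ.filter P with hG
  have hset : ({i : Fin n | P i} : Set (Fin n)) = ↑G := by
    ext i; simp [hG]
  have hchoice : ∀ i, ∃ qq : M × M, ¬ P i → (qq.1 ∉ U ∧ qq.2 ∉ U ∧
      dist qq.1 (u i) ≤ ε / 8 * dist (u i) (v i) ∧
      dist qq.2 (v i) ≤ ε / 8 * dist (u i) (v i)) := by
    intro i
    by_cases hi : P i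
    · exact ⟨(base, base), fun hc => absurd hi hc⟩
    · have hi' := hi
      simp only [hP] at hi'
      push_neg at hi'
      obtain ⟨hu', hv'⟩ := hi'
      obtain ⟨a, ha, haU⟩ := Set.not_subset.1 hu'
      obtain ⟨b, hb, hbU⟩ := Set.not_subset.1 hv'
      exact ⟨(a, b), fun _ =>
        ⟨haU, hbU, Metric.mem_closedBall.1 ha, Metric.mem_closedBall.1 hb⟩⟩
  choose q hq using hchoice
  have hq1 : ∀ i, ¬ P i → (q i).1 ∉ U := fun i hi => (hq i hi).1
  have hq2 : ∀ i, ¬ P i → (q i).2 ∉ U := fun i hi => (hq i hi).2.1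
  have hq3 : ∀ i, ¬ P i → dist (q i).1 (u i) ≤ ε / 8 * dist (u i) (v i) :=
    fun i hi => (hq i hi).2.2.1
  have hq4 : ∀ i, ¬ P i → dist (q i).2 (v i) ≤ ε / 8 * dist (u i) (v i) :=
    fun i hi => (hq i hi).2.2.2
  set w : Fin n → F := fun i =>
    if P i then 0 else (dist (u i) (v i))⁻¹ • (h.toFun (q i).1 - h.toFun (q i).2) with hw
  have hmemx : ∀ x : M, x ∉ U → h.toFun x ∈ h.freeSub Uᶜ := fun x hx =>
    Submodule.le_topologicalClosure _
      (Submodule.subset_span ⟨x, Set.mem_union_left _ hx, rfl⟩)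
  have hwmem : ∀ i, w i ∈ h.freeSub Uᶜ := by
    intro i
    by_cases hi : P i
    · simp only [hw, if_pos hi]; exact Submodule.zero_mem _
    · simp only [hw, if_neg hi]
      exact Submodule.smul_mem _ _
        (Submodule.sub_mem _ (hmemx _ (hq1 i hi)) (hmemx _ (hq2 i hi)))
  set η : F := (n : ℝ)⁻¹ • ∑ i, w i with hη
  have hηmem : η ∈ h.freeSub Uᶜ :=
    Submodule.smul_mem _ _ (Submodule.sum_mem _ fun i _ => hwmem i)
  have hbound : ∀ i, ‖h.molecule (u i) (v i) - w i‖ ≤ if P i then 1 else ε / 4 := by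
    intro i
    have hd : 0 < dist (u i) (v i) := dist_pos.2 (huv i)
    by_cases hi : P i
    · simp only [hw, if_pos hi, sub_zero, FreeSpaceData.molecule]
      rw [norm_smul, h.norm_sub, norm_inv, Real.norm_eq_abs, abs_of_pos hd,
        inv_mul_cancel₀ hd.ne']
    · simp only [hw, if_neg hi, FreeSpaceData.molecule]
      rw [← smul_sub, norm_smul, norm_inv, Real.norm_eq_abs, abs_of_pos hd]
      have key : h.toFun (u i) - h.toFun (v i) - (h.toFun (q i).1 - h.toFun (q i).2)
          = (h.toFun (u i) - h.toFun (q i).1) - (h.toFun (v i) - h.toFun (q i).2) := by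
        abel
      rw [key]
      have h1 : ‖(h.toFun (u i) - h.toFun (q i).1) - (h.toFun (v i) - h.toFun (q i).2)‖
          ≤ ε / 8 * dist (u i) (v i) + ε / 8 * dist (u i) (v i) := by
        refine le_trans (norm_sub_le _ _) ?_
        rw [h.norm_sub, h.norm_sub]
        have := hq3 i hi
        have := hq4 i hi
        rw [dist_comm (u i) (q i).1, dist_comm (v i) (q i).2]
        linarith
      calc (dist (u i) (v i))⁻¹ *
            ‖(h.toFun (u i) - h.toFun (q i).1) - (h.toFun (v i) - h.toFun (q i).2)‖
          ≤ (dist (u i) (v i))⁻¹ * (ε / 8 * dist (u i) (v i) + ε / 8 * dist (u i) (v i)) := by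
            exact mul_le_mul_of_nonneg_left h1 (by positivity)
        _ = ε / 4 := by field_simp; ring
  have hnpos : (0 : ℝ) < (n : ℝ) := by exact_mod_cast hn
  have hnorm : ‖γ - η‖ ≤ ((G.card : ℝ) + (n : ℝ) * (ε / 4)) / n := by
    have hdiff : γ - η = (n : ℝ)⁻¹ • ∑ i, (h.molecule (u i) (v i) - w i) := by
      rw [hγ, hη, ← smul_sub, ← Finset.sum_sub_distrib]
    rw [hdiff, norm_smul, norm_inv, Real.norm_eq_abs, abs_of_pos hnpos]
    have h1 : ‖∑ i, (h.molecule (u i) (v i) - w i)‖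
        ≤ ∑ i : Fin n, (if P i then (1 : ℝ) else ε / 4) :=
      norm_sum_le_of_le _ fun i _ => hbound i
    have h2 : (∑ i : Fin n, (if P i then (1 : ℝ) else ε / 4))
        ≤ (G.card : ℝ) + (n : ℝ) * (ε / 4) := by
      rw [Finset.sum_ite, Finset.sum_const, Finset.sum_const]
      have hc : ((Finset.univ.filter fun i => ¬ P i).card : ℝ) ≤ (n : ℝ) := by
        exact_mod_cast le_trans (Finset.card_filter_le _ _) (by simp)
      have hε4 : (0 : ℝ) ≤ ε / 4 := by linarith
      simp only [nsmul_eq_mul, hG]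
      nlinarith [mul_le_mul_of_nonneg_right hc hε4]
    rw [div_eq_inv_mul]
    exact mul_le_mul_of_nonneg_left (le_trans h1 h2) (by positivity)
  have hle : Metric.infDist γ ↑(h.freeSub Uᶜ) ≤ ‖γ - η‖ := by
    rw [← dist_eq_norm]
    exact Metric.infDist_le_dist_of_mem hηmem
  have hfinal : (n : ℝ) * ε < (G.card : ℝ) + (n : ℝ) * (ε / 4) := by
    have := lt_of_lt_of_le (lt_of_lt_of_le hdist hle) hnorm
    calc (n : ℝ) * ε = ε * n := by ring
      _ < ((G.card : ℝ) + (n : ℝ) * (ε / 4)) / n * n := by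
          exact mul_lt_mul_of_pos_right this hnpos
      _ = (G.card : ℝ) + (n : ℝ) * (ε / 4) := by
          field_simp
  rw [hset, Set.ncard_coe_finset]
  nlinarith
end
end

section
/- Let M and N be pointed metric spaces (both base points denoted 0), let f : M → N be a Lipschitz map with f(0) = 0, and let f̂ : F(M) → F(N) be the unique bounded linear operator satisfying f̂(δ_M(x)) = δ_N(f(x)) for every x ∈ M. If W ⊆ F(M) is uniformly regular, then f̂(W) is uniformly regular in F(N). -/
open Metric Set Filter Pointwise

noncomputable section

/-- the linearization `f̂ : F(M) → F(N)` of a base-point preserving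
Lipschitz map `f : M → N` (i.e. the bounded linear operator with `f̂(δ_M x) = δ_N (f x)`)
maps uniformly regular sets to uniformly regular sets. -/
theorem stmt_6 {M N : Type*} [MetricSpace M] [MetricSpace N] (baseM : M) (baseN : N)
    {F G : Type*} [NormedAddCommGroup F] [NormedSpace ℝ F] [CompleteSpace F]
    [NormedAddCommGroup G] [NormedSpace ℝ G] [CompleteSpace G]
    (hM : FreeSpaceData M baseM F) (hN : FreeSpaceData N baseN G)
    (f : M → N) (K : NNReal) (hf : LipschitzWith K f) (hf0 : f baseM = baseN)
    (T : F →L[ℝ] G) (hT : ∀ x : M, T (hM.toFun x) = hN.toFun (f x))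
    (W : Set F) (hW : hM.UniformlyRegular W) :
    hN.UniformlyRegular (T '' W) := by
  obtain ⟨hWb, hWreg⟩ := hW
  constructor
  · exact T.lipschitz.isBounded_image hWb
  · intro ε hε U hU
    have hTnorm : (0:ℝ) ≤ ‖T‖ := norm_nonneg T
    have hε'pos : 0 < ε / (‖T‖ + 1) := div_pos hε (by linarith)
    obtain ⟨K', hK'U, hK'c, hsub⟩ :=
      hWreg (ε / (‖T‖ + 1)) hε'pos (f ⁻¹' U) (hU.preimage hf.continuous)
    refine ⟨f '' K', ?_, hK'c.image hf.continuous, ?_⟩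
    · rintro _ ⟨x, hx, rfl⟩; exact hK'U hx
    · rintro _ ⟨w, hw, rfl⟩
      obtain ⟨a, ha, b, hb, rfl⟩ := hsub hw
      refine ⟨T a, ?_, T b, ?_, (map_add T a b).symm⟩
      · -- T a ∈ freeSub (f '' K' ∪ Uᶜ)
        have hspan : Set.MapsTo T
            (Submodule.span ℝ (hM.toFun '' ((K' ∪ (f ⁻¹' U)ᶜ) ∪ {baseM})) : Set F)
            (Submodule.span ℝ (hN.toFun '' ((f '' K' ∪ Uᶜ) ∪ {baseN})) : Set G) := by
          intro x hx
          have : Submodule.map (T : F →ₗ[ℝ] G)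
              (Submodule.span ℝ (hM.toFun '' ((K' ∪ (f ⁻¹' U)ᶜ) ∪ {baseM})))
              ≤ Submodule.span ℝ (hN.toFun '' ((f '' K' ∪ Uᶜ) ∪ {baseN})) := by
            rw [Submodule.map_span]
            apply Submodule.span_mono
            rintro _ ⟨_, ⟨x, hx, rfl⟩, rfl⟩
            refine ⟨f x, ?_, (hT x).symm⟩
            rcases hx with (hx | hx) | hx
            · exact Or.inl (Or.inl ⟨x, hx, rfl⟩)
            · exact Or.inl (Or.inr hx)
            · simp only [Set.mem_singleton_iff] at hx
              subst hx
              exact Or.inr (by simp [hf0])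
          exact this ⟨x, hx, rfl⟩
        have ha' : a ∈ closure
            (Submodule.span ℝ (hM.toFun '' ((K' ∪ (f ⁻¹' U)ᶜ) ∪ {baseM})) : Set F) := by
          simpa [FreeSpaceData.freeSub, Submodule.topologicalClosure_coe] using ha
        have := map_mem_closure T.continuous ha' hspan
        simpa [FreeSpaceData.freeSub, Submodule.topologicalClosure_coe] using this
      · rw [Metric.mem_closedBall, dist_zero_right] at hb ⊢
        calc ‖T b‖ ≤ ‖T‖ * ‖b‖ := T.le_opNorm b
          _ ≤ ‖T‖ * (ε / (‖T‖ + 1)) := by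
              exact mul_le_mul_of_nonneg_left hb hTnorm
          _ ≤ ε := by
              rw [div_eq_mul_inv, ← mul_assoc]
              rw [mul_inv_le_iff₀ (by linarith : (0:ℝ) < ‖T‖ + 1)]
              nlinarith
end
end

section
/- Let M be a metric space, let N ⊆ M be a closed subset containing a distinguished point 0, and let (f_i)_{i∈I} be a family of 1-Lipschitz functions f_i : N → ℝ with f_i(0) = 0 such that the sets U_i = {x ∈ N : f_i(x) ≠ 0} are pairwise disjoint. Then there exist 2-Lipschitz functions f̃_i : M → ℝ such that f̃_i restricted to N equals f_i for every i ∈ I, and the sets {x ∈ M : f̃_i(x) ≠ 0} are pairwise disjoint. -/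
open Metric Set Filter Pointwise

noncomputable section

/-- disjointly supported `1`-Lipschitz functions on a closed subset `N`
vanishing at the base point extend to disjointly supported `2`-Lipschitz functions on `M`. -/
theorem stmt_7 {M : Type*} [MetricSpace M] (N : Set M) (hN : IsClosed N)
    (z : M) (hz : z ∈ N) {I : Type*}
    (f : I → N → ℝ) (hf : ∀ i, LipschitzWith 1 (f i)) (hf0 : ∀ i, f i ⟨z, hz⟩ = 0)
    (hdisj : Pairwise fun i j =>
      Disjoint {x : N | f i x ≠ 0} {x : N | f j x ≠ 0}) :
    ∃ g : I → M → ℝ, (∀ i, LipschitzWith 2 (g i)) ∧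
      (∀ i, ∀ x : N, g i x = f i x) ∧
      (Pairwise fun i j => Disjoint {x : M | g i x ≠ 0} {x : M | g j x ≠ 0}) := by
  
  classical
  set Z : I → Set M := fun i => {y | ∃ h : y ∈ N, f i ⟨y, h⟩ = 0} with hZdef
  have hZz : ∀ i, z ∈ Z i := fun i => ⟨hz, hf0 i⟩
  have hZne : ∀ i, (Z i).Nonempty := fun i => ⟨z, hZz i⟩
  have hZN : ∀ i, Z i ⊆ N := fun i y hy => hy.1
  -- 1-Lipschitz extension of each f i to M
  have hext : ∀ i, ∃ F : M → ℝ, LipschitzWith 1 F ∧ ∀ x : N, F x = f i x := by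
    intro i
    have h1 : LipschitzOnWith 1 (fun x => if h : x ∈ N then f i ⟨x, h⟩ else 0) N := by
      rw [lipschitzOnWith_iff_restrict]
      convert hf i using 1
      ext x
      simp [Set.restrict]
    obtain ⟨F, hF, hFe⟩ := h1.extend_real
    exact ⟨F, hF, fun x => by have := hFe x.2; simpa [x.2] using this.symm⟩
  choose F hFlip hFe using hext
  set t : I → M → ℝ := fun i x => infDist x (Z i) - infDist x N with htdef
  have htlip : ∀ i, LipschitzWith 2 (t i) := by
    intro i
    have := (lipschitz_infDist_pt (Z i)).sub (lipschitz_infDist_pt N)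
    norm_num at this
    exact this
  have ht0 : ∀ i x, 0 ≤ t i x :=
    fun i x => sub_nonneg.2 (infDist_le_infDist_of_subset (hZN i) (hZne i))
  -- bound |f i y| ≤ infDist y (Z i) for y ∈ N
  have hbound : ∀ i (y : N), |f i y| ≤ infDist (y : M) (Z i) := by
    intro i y
    by_contra h
    push_neg at h
    obtain ⟨w, hw, hwd⟩ := (infDist_lt_iff (hZne i)).1 h
    obtain ⟨hwN, hfw⟩ := hw
    have := (hf i).dist_le_mul y ⟨w, hwN⟩
    rw [Real.dist_eq, hfw, sub_zero] at this
    have hd : dist (y : N) (⟨w, hwN⟩ : N) = dist (y : M) w := rfl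
    rw [hd] at this
    simp only [NNReal.coe_one, one_mul] at this
    linarith
  set g : I → M → ℝ := fun i x => max (min (F i x) (t i x)) (-(t i x)) with hgdef
  have hgzero : ∀ i x, t i x = 0 → g i x = 0 := by
    intro i x h
    simp only [hgdef, h, neg_zero]
    rw [max_eq_right (min_le_right _ _)]
  refine ⟨g, ?_, ?_, ?_⟩
  · intro i
    have h1 : LipschitzWith 2 fun x => min (F i x) (t i x) := by
      have := (hFlip i).min (htlip i)
      simpa using this
    have h2 : LipschitzWith 2 fun x => -(t i x) := (htlip i).neg
    have := h1.max h2
    simpa using this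
  · intro i x
    have hb := hbound i x
    have hNd : infDist (x : M) N = 0 := infDist_zero_of_mem x.2
    have htx : t i (x : M) = infDist (x : M) (Z i) := by simp [htdef, hNd]
    have h1 : f i x ≤ t i (x : M) := htx ▸ (le_trans (le_abs_self _) hb)
    have h2 : -(t i (x : M)) ≤ f i x := by
      rw [htx]
      have := neg_abs_le (f i x)
      linarith
    simp only [hgdef, hFe i x]
    rw [min_eq_left h1, max_eq_left h2]
  · intro i j hij
    rw [Set.disjoint_left]
    rintro x hgi hgj
    simp only [mem_setOf_eq] at hgi hgj
    have hti : 0 < t i x := lt_of_le_of_ne (ht0 i x) fun h => hgi (hgzero i x h.symm)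
    have htj : 0 < t j x := lt_of_le_of_ne (ht0 j x) fun h => hgj (hgzero j x h.symm)
    have h1 : infDist x N < infDist x (Z i) := by simpa [htdef, sub_pos] using hti
    have h2 : infDist x N < infDist x (Z j) := by simpa [htdef, sub_pos] using htj
    obtain ⟨y, hyN, hyd⟩ := (infDist_lt_iff ⟨z, hz⟩).1 (lt_min h1 h2)
    have hy : y ∈ Z i ∨ y ∈ Z j := by
      by_contra h
      push_neg at h
      have h1' : f i ⟨y, hyN⟩ ≠ 0 := fun he => h.1 ⟨hyN, he⟩
      have h2' : f j ⟨y, hyN⟩ ≠ 0 := fun he => h.2 ⟨hyN, he⟩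
      exact Set.disjoint_left.1 (hdisj hij) h1' h2'
    rcases hy with hy | hy
    · exact absurd (infDist_le_dist_of_mem hy) (not_le.2 (lt_of_lt_of_le hyd (min_le_left _ _)))
    · exact absurd (infDist_le_dist_of_mem hy) (not_le.2 (lt_of_lt_of_le hyd (min_le_right _ _)))
end
end

section
/- Let M be a nonempty complete metric space in which every point is an accumulation point (a perfect metric space). Then M contains a bi-Lipschitz copy of a perfect subset of ℝ: there exist a compact perfect set C ⊆ ℝ, an injective map φ : C → M, and a constant L ≥ 1 such that (1/L)|s − t| ≤ d(φ(s), φ(t)) ≤ L|s − t| for all s, t ∈ C. -/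
open Metric Set Filter Pointwise

noncomputable section

namespace Stmt10Aux

variable {M : Type*} [MetricSpace M] [Nonempty M]

lemma exists_near (hM : ∀ x : M, Filter.NeBot (nhdsWithin x {x}ᶜ)) (x : M) {r : ℝ}
    (hr : 0 < r) : ∃ y : M, y ≠ x ∧ dist x y < r := by
  have hx : x ∈ closure ({x}ᶜ : Set M) :=
    mem_closure_iff_nhdsWithin_neBot.2 (hM x)
  rcases Metric.mem_closure_iff.1 hx r hr with ⟨y, hy, hxy⟩
  exact ⟨y, hy, hxy⟩

noncomputable def pick (hM : ∀ x : M, Filter.NeBot (nhdsWithin x {x}ᶜ)) (x : M) (r : ℝ) : M :=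
  if h : 0 < r then (exists_near hM x (by linarith : (0:ℝ) < r/8)).choose else x

lemma pick_spec (hM : ∀ x : M, Filter.NeBot (nhdsWithin x {x}ᶜ)) (x : M) {r : ℝ}
    (hr : 0 < r) : pick hM x r ≠ x ∧ dist x (pick hM x r) < r / 8 := by
  rw [pick, dif_pos hr]
  exact (exists_near hM x (by linarith : (0:ℝ) < r/8)).choose_spec

noncomputable def step (hM : ∀ x : M, Filter.NeBot (nhdsWithin x {x}ᶜ))
    (p : M × ℝ × ℝ) (b : Bool) : M × ℝ × ℝ :=
  if b then (pick hM p.1 p.2.2, p.2.1 + dist p.1 (pick hM p.1 p.2.2),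
      dist p.1 (pick hM p.1 p.2.2) / 4)
  else (p.1, p.2.1, dist p.1 (pick hM p.1 p.2.2) / 4)

noncomputable def X (hM : ∀ x : M, Filter.NeBot (nhdsWithin x {x}ᶜ))
    (a : ℕ → Bool) : ℕ → M × ℝ × ℝ
  | 0 => (Classical.arbitrary M, 0, 1)
  | n + 1 => step hM (X hM a n) (a n)

variable (hM : ∀ x : M, Filter.NeBot (nhdsWithin x {x}ᶜ))

noncomputable def P (a : ℕ → Bool) (n : ℕ) : M := (X hM a n).1
noncomputable def T (a : ℕ → Bool) (n : ℕ) : ℝ := (X hM a n).2.1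
noncomputable def R (a : ℕ → Bool) (n : ℕ) : ℝ := (X hM a n).2.2
noncomputable def D (a : ℕ → Bool) (n : ℕ) : ℝ :=
  dist (P hM a n) (pick hM (P hM a n) (R hM a n))

lemma R_succ (a : ℕ → Bool) (n : ℕ) : R hM a (n + 1) = D hM a n / 4 := by
  cases h : a n <;> simp [R, D, P, X, step, h]

lemma R_zero (a : ℕ → Bool) : R hM a 0 = 1 := rfl
lemma T_zero (a : ℕ → Bool) : T hM a 0 = 0 := rfl

lemma D_pos (a : ℕ → Bool) (n : ℕ) (hr : 0 < R hM a n) : 0 < D hM a n :=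
  dist_pos.2 (Ne.symm (pick_spec hM _ hr).1)

lemma D_lt (a : ℕ → Bool) (n : ℕ) (hr : 0 < R hM a n) : D hM a n < R hM a n / 8 :=
  (pick_spec hM _ hr).2

lemma R_pos (a : ℕ → Bool) : ∀ n, 0 < R hM a n := by
  intro n
  induction n with
  | zero => norm_num [R_zero]
  | succ n ih => rw [R_succ]; linarith [D_pos hM a n ih]

lemma R_succ_le (a : ℕ → Bool) (n : ℕ) : R hM a (n + 1) ≤ R hM a n / 32 := by
  have := D_lt hM a n (R_pos hM a n)
  rw [R_succ]; linarith

lemma R_le_geom (a : ℕ → Bool) : ∀ n, R hM a n ≤ (1 / 32 : ℝ) ^ n := by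
  intro n
  induction n with
  | zero => simp [R_zero]
  | succ n ih =>
    have h1 := R_succ_le hM a n
    have h2 : (0:ℝ) < (1/32 : ℝ) ^ n := by positivity
    calc R hM a (n+1) ≤ R hM a n / 32 := h1
      _ ≤ (1/32:ℝ)^n / 32 := by linarith
      _ = (1/32:ℝ)^(n+1) := by ring

lemma dist_P_succ (a : ℕ → Bool) (n : ℕ) :
    dist (P hM a (n + 1)) (P hM a n) ≤ 4 * R hM a (n + 1) := by
  rw [R_succ]
  simp only [D, P, R]
  cases h : a n
  · simp only [X, step, h, Bool.false_eq_true, if_false]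
    simp only [dist_self]
    positivity
  · simp only [X, step, h, if_true]
    rw [dist_comm]
    linarith [dist_nonneg (x := (X hM a n).1) (y := pick hM (X hM a n).1 (X hM a n).2.2)]

lemma dist_T_succ (a : ℕ → Bool) (n : ℕ) :
    dist (T hM a (n + 1)) (T hM a n) ≤ 4 * R hM a (n + 1) := by
  rw [R_succ]
  simp only [D, P, R, T]
  cases h : a n
  · simp only [X, step, h, Bool.false_eq_true, if_false]
    simp only [dist_self]
    positivity
  · simp only [X, step, h, if_true]
    rw [Real.dist_eq, add_sub_cancel_left, abs_of_nonneg dist_nonneg]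
    linarith [dist_nonneg (x := (X hM a n).1) (y := pick hM (X hM a n).1 (X hM a n).2.2)]

lemma cumul_P (a : ℕ → Bool) (n : ℕ) : ∀ k : ℕ,
    dist (P hM a (n + k)) (P hM a n) ≤ 5 * R hM a (n + 1) - 5 * R hM a (n + k + 1) := by
  intro k
  induction k with
  | zero => simp
  | succ k ih =>
    have h1 := dist_P_succ hM a (n + k)
    have h2 := R_succ_le hM a (n + k + 1)
    have h3 := R_pos hM a (n + k + 2)
    have := dist_triangle (P hM a (n + (k+1))) (P hM a (n + k)) (P hM a n)
    have e : n + (k + 1) = (n + k) + 1 := by ring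
    rw [e] at this ⊢
    have e2 : n + k + 1 + 1 = n + k + 2 := by ring
    rw [e2] at h2
    linarith

lemma cumul_T (a : ℕ → Bool) (n : ℕ) : ∀ k : ℕ,
    dist (T hM a (n + k)) (T hM a n) ≤ 5 * R hM a (n + 1) - 5 * R hM a (n + k + 1) := by
  intro k
  induction k with
  | zero => simp
  | succ k ih =>
    have h1 := dist_T_succ hM a (n + k)
    have h2 := R_succ_le hM a (n + k + 1)
    have h3 := R_pos hM a (n + k + 2)
    have := dist_triangle (T hM a (n + (k+1))) (T hM a (n + k)) (T hM a n)
    have e : n + (k + 1) = (n + k) + 1 := by ring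
    rw [e] at this ⊢
    have e2 : n + k + 1 + 1 = n + k + 2 := by ring
    rw [e2] at h2
    linarith

lemma cumul_P' (a : ℕ → Bool) {m n : ℕ} (h : n ≤ m) :
    dist (P hM a m) (P hM a n) ≤ 5 * R hM a (n + 1) := by
  obtain ⟨k, rfl⟩ := Nat.exists_eq_add_of_le h
  have := cumul_P hM a n k
  have := R_pos hM a (n + k + 1)
  linarith

lemma cumul_T' (a : ℕ → Bool) {m n : ℕ} (h : n ≤ m) :
    dist (T hM a m) (T hM a n) ≤ 5 * R hM a (n + 1) := by
  obtain ⟨k, rfl⟩ := Nat.exists_eq_add_of_le h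
  have := cumul_T hM a n k
  have := R_pos hM a (n + k + 1)
  linarith

lemma cauchy_P (a : ℕ → Bool) : CauchySeq (fun n => P hM a n) := by
  apply cauchySeq_of_le_geometric (1/32 : ℝ) (1/8 : ℝ) (by norm_num)
  intro n
  rw [dist_comm]
  have h1 := dist_P_succ hM a n
  have h2 := R_le_geom hM a (n + 1)
  have : (1/32:ℝ)^(n+1) = (1/32) * (1/32)^n := by ring
  rw [this] at h2
  calc dist (P hM a (n+1)) (P hM a n) ≤ 4 * R hM a (n+1) := h1
    _ ≤ 4 * ((1/32) * (1/32:ℝ)^n) := by linarith [R_pos hM a (n+1)]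
    _ = 1/8 * (1/32:ℝ)^n := by ring

lemma cauchy_T (a : ℕ → Bool) : CauchySeq (fun n => T hM a n) := by
  apply cauchySeq_of_le_geometric (1/32 : ℝ) (1/8 : ℝ) (by norm_num)
  intro n
  rw [dist_comm]
  have h1 := dist_T_succ hM a n
  have h2 := R_le_geom hM a (n + 1)
  have : (1/32:ℝ)^(n+1) = (1/32) * (1/32)^n := by ring
  rw [this] at h2
  calc dist (T hM a (n+1)) (T hM a n) ≤ 4 * R hM a (n+1) := h1
    _ ≤ 4 * ((1/32) * (1/32:ℝ)^n) := by linarith [R_pos hM a (n+1)]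
    _ = 1/8 * (1/32:ℝ)^n := by ring

variable [CompleteSpace M]

noncomputable def Phi (a : ℕ → Bool) : M :=
  (cauchySeq_tendsto_of_complete (cauchy_P hM a)).choose

lemma Phi_spec (a : ℕ → Bool) :
    Tendsto (fun n => P hM a n) atTop (nhds (Phi hM a)) :=
  (cauchySeq_tendsto_of_complete (cauchy_P hM a)).choose_spec

noncomputable def H (a : ℕ → Bool) : ℝ :=
  (cauchySeq_tendsto_of_complete (cauchy_T hM a)).choose

lemma H_spec (a : ℕ → Bool) :
    Tendsto (fun n => T hM a n) atTop (nhds (H hM a)) :=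
  (cauchySeq_tendsto_of_complete (cauchy_T hM a)).choose_spec

lemma dist_Phi_P (a : ℕ → Bool) (n : ℕ) :
    dist (Phi hM a) (P hM a n) ≤ 5 * R hM a (n + 1) := by
  have ht : Tendsto (fun m => dist (P hM a m) (P hM a n)) atTop
      (nhds (dist (Phi hM a) (P hM a n))) := (Phi_spec hM a).dist tendsto_const_nhds
  refine le_of_tendsto ht ?_
  filter_upwards [eventually_ge_atTop n] with m hm
  exact cumul_P' hM a hm

lemma dist_H_T (a : ℕ → Bool) (n : ℕ) :
    dist (H hM a) (T hM a n) ≤ 5 * R hM a (n + 1) := by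
  have ht : Tendsto (fun m => dist (T hM a m) (T hM a n)) atTop
      (nhds (dist (H hM a) (T hM a n))) := (H_spec hM a).dist tendsto_const_nhds
  refine le_of_tendsto ht ?_
  filter_upwards [eventually_ge_atTop n] with m hm
  exact cumul_T' hM a hm

lemma X_agree (a b : ℕ → Bool) : ∀ n, (∀ i < n, a i = b i) → X hM a n = X hM b n := by
  intro n
  induction n with
  | zero => intro _; rfl
  | succ n ih =>
    intro h
    have h1 : X hM a n = X hM b n := ih fun i hi => h i (Nat.lt_succ_of_lt hi)
    show step hM (X hM a n) (a n) = step hM (X hM b n) (b n)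
    rw [h1, h n (Nat.lt_succ_self n)]

lemma key (a b : ℕ → Bool) (n : ℕ) (hag : ∀ i < n, a i = b i)
    (ha : a n = false) (hb : b n = true) :
    dist (H hM a) (H hM b) ≤ 2 * dist (Phi hM a) (Phi hM b) ∧
    dist (Phi hM a) (Phi hM b) ≤ 2 * dist (H hM a) (H hM b) ∧
    H hM a ≠ H hM b := by
  have heq := X_agree hM a b n hag
  have hdpos : 0 < D hM a n := D_pos hM a n (R_pos hM a n)
  set d := D hM a n with hd
  have hPa : P hM a (n+1) = (X hM a n).1 := by
    simp only [P, X, step, ha, Bool.false_eq_true, if_false]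
  have hTa : T hM a (n+1) = (X hM a n).2.1 := by
    simp only [T, X, step, ha, Bool.false_eq_true, if_false]
  have hPb : P hM b (n+1) = pick hM (X hM a n).1 (X hM a n).2.2 := by
    simp only [P, X, step, hb, if_true, ← heq]
  have hTb : T hM b (n+1) = (X hM a n).2.1 + dist (X hM a n).1 (pick hM (X hM a n).1 (X hM a n).2.2) := by
    simp only [T, X, step, hb, if_true, ← heq]
  have hdd : d = dist (X hM a n).1 (pick hM (X hM a n).1 (X hM a n).2.2) := rfl
  have hdist_P : dist (P hM a (n+1)) (P hM b (n+1)) = d := by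
    rw [hPa, hPb, hdd]
  have hdist_T : dist (T hM a (n+1)) (T hM b (n+1)) = d := by
    rw [hTa, hTb, Real.dist_eq, ← hdd]
    have e : (X hM a n).2.1 - ((X hM a n).2.1 + d) = -d := by ring
    rw [e, abs_neg, abs_of_pos hdpos]
  have hR1a : R hM a (n+1) = d / 4 := R_succ hM a n
  have hR1b : R hM b (n+1) = d / 4 := by
    rw [R_succ]
    congr 1
    simp only [D, P, R, ← heq]
    rw [← hdd]
  have hA : dist (Phi hM a) (P hM a (n+1)) ≤ 5 * (d / 128) := by
    have h1 := dist_Phi_P hM a (n+1)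
    have h2 := R_succ_le hM a (n+1)
    rw [hR1a] at h2
    linarith
  have hB : dist (Phi hM b) (P hM b (n+1)) ≤ 5 * (d / 128) := by
    have h1 := dist_Phi_P hM b (n+1)
    have h2 := R_succ_le hM b (n+1)
    rw [hR1b] at h2
    linarith
  have hC : dist (H hM a) (T hM a (n+1)) ≤ 5 * (d / 128) := by
    have h1 := dist_H_T hM a (n+1)
    have h2 := R_succ_le hM a (n+1)
    rw [hR1a] at h2
    linarith
  have hD : dist (H hM b) (T hM b (n+1)) ≤ 5 * (d / 128) := by
    have h1 := dist_H_T hM b (n+1)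
    have h2 := R_succ_le hM b (n+1)
    rw [hR1b] at h2
    linarith
  have t1 := dist_triangle4 (P hM a (n+1)) (Phi hM a) (Phi hM b) (P hM b (n+1))
  rw [hdist_P, dist_comm (P hM a (n+1)) (Phi hM a)] at t1
  have t2 := dist_triangle4 (Phi hM a) (P hM a (n+1)) (P hM b (n+1)) (Phi hM b)
  rw [hdist_P, dist_comm (P hM b (n+1)) (Phi hM b)] at t2
  have s1 := dist_triangle4 (T hM a (n+1)) (H hM a) (H hM b) (T hM b (n+1))
  rw [hdist_T, dist_comm (T hM a (n+1)) (H hM a)] at s1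
  have s2 := dist_triangle4 (H hM a) (T hM a (n+1)) (T hM b (n+1)) (H hM b)
  rw [hdist_T, dist_comm (T hM b (n+1)) (H hM b)] at s2
  refine ⟨by linarith, by linarith, fun h => ?_⟩
  have : dist (H hM a) (H hM b) = 0 := by rw [h, dist_self]
  linarith

lemma key' (a b : ℕ → Bool) (hab : a ≠ b) :
    dist (H hM a) (H hM b) ≤ 2 * dist (Phi hM a) (Phi hM b) ∧
    dist (Phi hM a) (Phi hM b) ≤ 2 * dist (H hM a) (H hM b) ∧
    H hM a ≠ H hM b := by
  have hex : ∃ n, a n ≠ b n := by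
    by_contra h
    push_neg at h
    exact hab (funext h)
  set n := Nat.find hex with hn
  have hne : a n ≠ b n := Nat.find_spec hex
  have hag : ∀ i < n, a i = b i := fun i hi => by
    by_contra h
    exact Nat.find_min hex hi h
  cases h1 : a n <;> cases h2 : b n
  · exact absurd (h1.trans h2.symm) hne
  · exact key hM a b n hag h1 h2
  · have hag' : ∀ i < n, b i = a i := fun i hi => (hag i hi).symm
    obtain ⟨k1, k2, k3⟩ := key hM b a n hag' h2 h1
    rw [dist_comm (H hM b), dist_comm (Phi hM b)] at k1 k2
    exact ⟨k1, k2, (Ne.symm k3)⟩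
  · exact absurd (h1.trans h2.symm) hne

lemma agree_bound (a b : ℕ → Bool) (n : ℕ) (hag : ∀ i < n, a i = b i) :
    dist (H hM a) (H hM b) ≤ (1 / 32 : ℝ) ^ n := by
  have heq := X_agree hM a b n hag
  have hT : T hM a n = T hM b n := by simp only [T, heq]
  have h1 := dist_H_T hM a n
  have h2 := dist_H_T hM b n
  rw [← hT] at h2
  have h3 := dist_triangle (H hM a) (T hM a n) (H hM b)
  rw [dist_comm (T hM a n) (H hM b)] at h3
  have h4 : R hM a (n+1) ≤ (1/32:ℝ)^(n+1) := R_le_geom hM a (n+1)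
  have h5 : R hM b (n+1) ≤ (1/32:ℝ)^(n+1) := R_le_geom hM b (n+1)
  have h6 : (0:ℝ) < (1/32:ℝ)^n := by positivity
  have h7 : (1/32:ℝ)^(n+1) = (1/32) * (1/32:ℝ)^n := by ring
  rw [h7] at h4 h5
  linarith

lemma H_continuous : Continuous (H hM) := by
  rw [continuous_iff_continuousAt]
  intro a
  rw [ContinuousAt, Metric.tendsto_nhds]
  intro ε hε
  obtain ⟨n, hn⟩ := exists_pow_lt_of_lt_one hε (by norm_num : (1/32:ℝ) < 1)
  have hV : ∀ᶠ b : ℕ → Bool in nhds a, ∀ i < n, b i = a i := by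
    have h1 : ∀ i : ℕ, ∀ᶠ b : ℕ → Bool in nhds a, b i = a i := by
      intro i
      have hc : Continuous fun b : ℕ → Bool => b i := continuous_apply i
      have : IsOpen {b : ℕ → Bool | b i = a i} :=
        hc.isOpen_preimage {a i} (isOpen_discrete _)
      exact this.mem_nhds rfl
    have h2 : ∀ᶠ b : ℕ → Bool in nhds a, ∀ i ∈ Finset.range n, b i = a i :=
      (eventually_all_finset (Finset.range n)).2 fun i _ => h1 i
    filter_upwards [h2] with b hb i hi
    exact hb i (Finset.mem_range.2 hi)
  filter_upwards [hV] with b hb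
  have := agree_bound hM b a n fun i hi => hb i hi
  calc dist (H hM b) (H hM a) ≤ (1/32:ℝ)^n := this
    _ < ε := hn

end Stmt10Aux


/-- a nonempty complete metric space without isolated points contains a
bi-Lipschitz copy of a (nonempty, compact) perfect subset of `ℝ`. -/
theorem stmt_10 {M : Type*} [MetricSpace M] [CompleteSpace M] [Nonempty M]
    (hM : ∀ x : M, Filter.NeBot (nhdsWithin x {x}ᶜ)) :
    ∃ (C : Set ℝ) (φ : ℝ → M) (L : ℝ),
      IsCompact C ∧ Perfect C ∧ C.Nonempty ∧ 1 ≤ L ∧ Set.InjOn φ C ∧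
      ∀ s ∈ C, ∀ t ∈ C,
        (1 / L) * |s - t| ≤ dist (φ s) (φ t) ∧ dist (φ s) (φ t) ≤ L * |s - t| := by
  classical
  set C : Set ℝ := Set.range (Stmt10Aux.H hM) with hC
  set φ : ℝ → M := fun t =>
    if h : ∃ a, Stmt10Aux.H hM a = t then Stmt10Aux.Phi hM h.choose
    else Classical.arbitrary M with hφ
  have hφ_spec : ∀ t ∈ C, ∃ a, Stmt10Aux.H hM a = t ∧ φ t = Stmt10Aux.Phi hM a := by
    intro t ht
    obtain ⟨a, ha⟩ := ht
    have h : ∃ a, Stmt10Aux.H hM a = t := ⟨a, ha⟩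
    refine ⟨h.choose, h.choose_spec, ?_⟩
    simp only [hφ, dif_pos h]
  have hcont := Stmt10Aux.H_continuous hM
  have hcomp : IsCompact C := isCompact_range hcont
  have main : ∀ s ∈ C, ∀ t ∈ C,
      (1 / 2 : ℝ) * |s - t| ≤ dist (φ s) (φ t) ∧ dist (φ s) (φ t) ≤ 2 * |s - t| := by
    intro s hs t ht
    obtain ⟨a, ha, hφs⟩ := hφ_spec s hs
    obtain ⟨b, hb, hφt⟩ := hφ_spec t ht
    rw [hφs, hφt]
    by_cases hab : a = b
    · have hst : s = t := by rw [← ha, ← hb, hab]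
      subst hab hst
      simp
    · obtain ⟨k1, k2, k3⟩ := Stmt10Aux.key' hM a b hab
      rw [Real.dist_eq] at k1 k2
      rw [ha, hb] at k1 k2
      exact ⟨by linarith, by linarith⟩
  have hinj : Set.InjOn φ C := by
    intro s hs t ht hst
    obtain ⟨h1, h2⟩ := main s hs t ht
    rw [hst, dist_self] at h1
    have habs : |s - t| ≤ 0 := by linarith
    have : s - t = 0 := abs_eq_zero.1 (le_antisymm habs (abs_nonneg _))
    linarith
  have hperf : Perfect C := by
    constructor
    · exact hcomp.isClosed
    · rw [preperfect_iff_nhds]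
      intro x hx U hU
      obtain ⟨a, ha⟩ := hx
      obtain ⟨ε, hε, hball⟩ := Metric.mem_nhds_iff.1 hU
      obtain ⟨n, hn⟩ := exists_pow_lt_of_lt_one hε (by norm_num : (1/32:ℝ) < 1)
      set b := Function.update a n (!(a n)) with hbdef
      have hagree : ∀ i < n, b i = a i := fun i hi =>
        Function.update_of_ne (Nat.ne_of_lt hi) _ _
      have hbn : b n = !(a n) := Function.update_self n _ a
      have hab : b ≠ a := by
        intro h
        have h2 := congrFun h n
        rw [hbn] at h2
        exact Bool.not_ne_self (a n) h2
      have hne : Stmt10Aux.H hM b ≠ Stmt10Aux.H hM a := (Stmt10Aux.key' hM b a hab).2.2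
      refine ⟨Stmt10Aux.H hM b, ⟨?_, Set.mem_range_self b⟩, ha ▸ hne⟩
      apply hball
      rw [mem_ball, ← ha]
      calc dist (Stmt10Aux.H hM b) (Stmt10Aux.H hM a) ≤ (1/32:ℝ)^n :=
            Stmt10Aux.agree_bound hM b a n hagree
        _ < ε := hn
  refine ⟨C, φ, 2, hcomp, hperf,
    ⟨Stmt10Aux.H hM (fun _ => false), Set.mem_range_self _⟩, by norm_num, hinj, ?_⟩
  intro s hs t ht
  have := main s hs t ht
  norm_num at this ⊢
  exact this
end
end

section
/- Let M be a complete pointed metric space, k a positive integer, and let FS_k(M) ⊆ F(M) denote the set of all elements of F(M) of the form ∑_{i=1}^k a_i δ(x_i) with a_1,…,a_k ∈ ℝ and x_1,…,x_k ∈ M (elements supported on at most k points). If W ⊆ FS_k(M) is bounded, then W is relatively norm-compact if and only if W is uniformly regular. -/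
open Metric Set Filter Pointwise

noncomputable section

section Aux

variable {M : Type*} [MetricSpace M] {base : M}
  {F : Type*} [NormedAddCommGroup F] [NormedSpace ℝ F]
variable (h : FreeSpaceData M base F)

lemma aux_norm_toFun (x : M) : ‖h.toFun x‖ = dist x base := by
  have := h.norm_sub x base
  rwa [h.map_base, sub_zero] at this

lemma aux_freeSub_mono {S T : Set M} (hST : S ⊆ T) : h.freeSub S ≤ h.freeSub T :=
  Submodule.topologicalClosure_mono
    (Submodule.span_mono (Set.image_mono (Set.union_subset_union_left _ hST)))

lemma aux_mem_freeSub {S : Set M} {x : M} (hx : x ∈ S ∪ {base}) :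
    h.toFun x ∈ h.freeSub S :=
  (Submodule.le_topologicalClosure _) (Submodule.subset_span ⟨x, hx, rfl⟩)

lemma aux_exists_functional (S : Set M) (L : NNReal) (g : M → ℝ)
    (hg : LipschitzWith L g) (hb : g base = 0) (hS : ∀ x ∈ S, g x = 0) :
    ∃ ψ : F →L[ℝ] ℝ, ‖ψ‖ ≤ L ∧ (∀ x, ψ (h.toFun x) = g x) ∧
      ∀ γ ∈ h.freeSub S, ψ γ = 0 := by
  obtain ⟨ψ, hψ, hx⟩ := h.extend L g hg hb
  refine ⟨ψ, hψ, hx, ?_⟩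
  have hle : h.freeSub S ≤ LinearMap.ker (ψ : F →ₗ[ℝ] ℝ) := by
    apply Submodule.topologicalClosure_minimal
    · rw [Submodule.span_le]
      rintro - ⟨z, hz, rfl⟩
      simp only [SetLike.mem_coe, LinearMap.mem_ker, ContinuousLinearMap.coe_coe]
      rcases hz with hz | hz
      · rw [hx z]; exact hS z hz
      · rw [Set.mem_singleton_iff.1 hz, hx base]; exact hb
    · exact ContinuousLinearMap.isClosed_ker ψ
  intro γ hγ
  exact LinearMap.mem_ker.1 (hle hγ)

lemma aux_eval_sum (ψ : F →L[ℝ] ℝ) (g : M → ℝ) (hx : ∀ x, ψ (h.toFun x) = g x)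
    {k : ℕ} (a : Fin k → ℝ) (x : Fin k → M) :
    ψ (∑ i, a i • h.toFun (x i)) = ∑ i, a i * g (x i) := by
  rw [map_sum]
  exact Finset.sum_congr rfl fun i _ => by rw [map_smul, smul_eq_mul, hx]

lemma aux_norm_tri {F : Type*} [NormedAddCommGroup F] (A B : F) : ‖B‖ ≤ ‖A‖ + ‖A - B‖ := by
  calc ‖B‖ = ‖A - (A - B)‖ := by congr 1; abel
    _ ≤ ‖A‖ + ‖A - B‖ := norm_sub_le _ _

end Aux

section Aux2

variable {M : Type*} [MetricSpace M] {base : M}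
  {F : Type*} [NormedAddCommGroup F] [NormedSpace ℝ F]
variable (h : FreeSpaceData M base F)

lemma aux_lip_radial (D : ℝ) (q : M) : LipschitzWith 1 (fun z => max 0 (D - dist z q)) := by
  apply LipschitzWith.of_dist_le_mul
  intro z w
  rw [Real.dist_eq, NNReal.coe_one, one_mul]
  calc |max 0 (D - dist z q) - max 0 (D - dist w q)|
      = |max (D - dist z q) 0 - max (D - dist w q) 0| := by rw [max_comm, max_comm (D - dist w q)]
    _ ≤ |(D - dist z q) - (D - dist w q)| := abs_max_sub_max_le_abs _ _ _
    _ = |dist w q - dist z q| := by ring_nf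
    _ ≤ dist w z := abs_dist_sub_le _ _ _
    _ = dist z w := dist_comm _ _

lemma aux_coeff {k : ℕ} (S : Set M) (hbS : base ∈ S) (a : Fin k → ℝ) (x : Fin k → M)
    (γ : F) (hγ : γ ∈ h.freeSub S) (i₀ : Fin k) :
    |a i₀| * Metric.infDist (x i₀) (S ∪ {z | ∃ j, j ≠ i₀ ∧ x j = z}) ≤
      ‖∑ i, a i • h.toFun (x i) - γ‖ := by
  set T : Set M := S ∪ {z | ∃ j, j ≠ i₀ ∧ x j = z} with hT
  set D : ℝ := Metric.infDist (x i₀) T with hD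
  have hD0 : 0 ≤ D := Metric.infDist_nonneg
  set g : M → ℝ := fun z => max 0 (D - dist z (x i₀)) with hg
  have hgT : ∀ z ∈ T, g z = 0 := by
    intro z hz
    have : D ≤ dist z (x i₀) := by
      rw [dist_comm]; exact Metric.infDist_le_dist_of_mem hz
    simp only [hg, max_eq_left_iff]; linarith
  obtain ⟨ψ, hψn, hψx, hψ0⟩ := aux_exists_functional h S 1 g (aux_lip_radial D (x i₀))
    (hgT base (Or.inl hbS)) (fun z hz => hgT z (Or.inl hz))
  have heval : ψ (∑ i, a i • h.toFun (x i)) = a i₀ * D := by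
    rw [map_sum]
    rw [Finset.sum_eq_single i₀]
    · rw [map_smul, smul_eq_mul, hψx]
      simp [hg, dist_self, hD0]
    · intro j _ hj
      rw [map_smul, smul_eq_mul, hψx, hgT (x j) (Or.inr ⟨j, hj, rfl⟩), mul_zero]
    · intro hmem; exact absurd (Finset.mem_univ i₀) hmem
  have : |a i₀ * D| ≤ ‖ψ‖ * ‖∑ i, a i • h.toFun (x i) - γ‖ := by
    rw [← heval]
    have : ψ (∑ i, a i • h.toFun (x i)) = ψ (∑ i, a i • h.toFun (x i) - γ) := by
      rw [map_sub, hψ0 γ hγ, sub_zero]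
    rw [this]
    calc |ψ (∑ i, a i • h.toFun (x i) - γ)| = ‖ψ (∑ i, a i • h.toFun (x i) - γ)‖ := rfl
      _ ≤ ‖ψ‖ * ‖∑ i, a i • h.toFun (x i) - γ‖ := ψ.le_opNorm _
  calc |a i₀| * D = |a i₀ * D| := by rw [abs_mul, abs_of_nonneg hD0]
    _ ≤ ‖ψ‖ * ‖∑ i, a i • h.toFun (x i) - γ‖ := this
    _ ≤ 1 * ‖∑ i, a i • h.toFun (x i) - γ‖ := by
        gcongr; exact hψn.trans (by norm_num)
    _ = _ := one_mul _

end Aux2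

section Aux3

variable {M : Type*} [MetricSpace M] {base : M}
  {F : Type*} [NormedAddCommGroup F] [NormedSpace ℝ F]
variable (h : FreeSpaceData M base F)

lemma aux_sum_update {k : ℕ} (a : Fin k → ℝ) (x : Fin k → M) (i₀ : Fin k) (t : M) :
    ∑ i, a i • h.toFun (Function.update x i₀ t i) =
      ∑ i, a i • h.toFun (x i) - a i₀ • h.toFun (x i₀) + a i₀ • h.toFun t := by
  rw [← Finset.sum_erase_add _ _ (Finset.mem_univ i₀),
      ← Finset.sum_erase_add _ (fun i => a i • h.toFun (x i)) (Finset.mem_univ i₀)]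
  have h1 : ∀ i ∈ Finset.univ.erase i₀,
      a i • h.toFun (Function.update x i₀ t i) = a i • h.toFun (x i) := by
    intro i hi
    rw [Function.update_of_ne (Finset.ne_of_mem_erase hi)]
  rw [Finset.sum_congr rfl h1, Function.update_self]
  abel

lemma aux_sum_merge {k : ℕ} (a : Fin k → ℝ) (x : Fin k → M) (i₀ j : Fin k) (hj : j ≠ i₀) :
    ∑ i, (Function.update (Function.update a i₀ 0) j (a j + a i₀)) i •
        h.toFun (Function.update x i₀ base i) =
      ∑ i, a i • h.toFun (x i) - a i₀ • h.toFun (x i₀) + a i₀ • h.toFun (x j) := by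
  classical
  set a' := Function.update (Function.update a i₀ 0) j (a j + a i₀) with ha'
  set x' := Function.update x i₀ base with hx'
  have hji : j ∈ Finset.univ.erase i₀ := Finset.mem_erase.2 ⟨hj, Finset.mem_univ j⟩
  rw [← Finset.sum_erase_add _ _ (Finset.mem_univ i₀),
      ← Finset.sum_erase_add _ (fun i => a i • h.toFun (x i)) (Finset.mem_univ i₀),
      ← Finset.sum_erase_add _ _ hji,
      ← Finset.sum_erase_add _ (fun i => a i • h.toFun (x i)) hji]
  have e1 : ∀ i ∈ (Finset.univ.erase i₀).erase j,
      a' i • h.toFun (x' i) = a i • h.toFun (x i) := by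
    intro i hi
    have hij : i ≠ j := Finset.ne_of_mem_erase hi
    have hii₀ : i ≠ i₀ := Finset.ne_of_mem_erase (Finset.mem_of_mem_erase hi)
    rw [ha', hx', Function.update_of_ne hii₀, Function.update_of_ne hij,
      Function.update_of_ne hii₀]
  rw [Finset.sum_congr rfl e1]
  have e2 : a' j • h.toFun (x' j) = (a j + a i₀) • h.toFun (x j) := by
    rw [ha', hx', Function.update_self, Function.update_of_ne hj]
  have e3 : a' i₀ • h.toFun (x' i₀) = 0 := by
    rw [ha', Function.update_of_ne (Ne.symm hj), Function.update_self, zero_smul]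
  rw [e2, e3, add_smul]
  abel

end Aux3

section Aux4

variable {M : Type*} [MetricSpace M] {base : M}
  {F : Type*} [NormedAddCommGroup F] [NormedSpace ℝ F]
variable (h : FreeSpaceData M base F)

open scoped Classical in
lemma aux_reduce {k : ℕ} (S : Set M) (hbS : base ∈ S) :
    ∀ (n : ℕ) (a : Fin k → ℝ) (x : Fin k → M) (γ : F), γ ∈ h.freeSub S →
      ∀ c : ℝ, 0 < c → ‖∑ i, a i • h.toFun (x i) - γ‖ < c →
      (Finset.univ.filter fun i => x i ∉ S).card ≤ n →
      ∃ (b : Fin k → ℝ) (y : Fin k → M), (∀ i, y i ∈ S) ∧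
        ‖∑ i, a i • h.toFun (x i) - ∑ i, b i • h.toFun (y i)‖ ≤ (3 ^ n - 1) * c := by
  classical
  intro n
  induction n with
  | zero =>
    intro a x γ hγ c hc hlt hcard
    have hall : ∀ i, x i ∈ S := by
      intro i; by_contra hxi
      have hmem : i ∈ Finset.univ.filter (fun i => x i ∉ S) := by
        simp [hxi]
      have := Finset.card_pos.2 ⟨i, hmem⟩
      omega
    exact ⟨a, x, hall, by simp⟩
  | succ n ih =>
    intro a x γ hγ c hc hlt hcard
    have hbound : (0:ℝ) ≤ (3 ^ (n+1) - 1) * c := by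
      have : (1:ℝ) ≤ 3 ^ (n+1) := one_le_pow₀ (by norm_num)
      nlinarith
    by_cases hall : ∀ i, x i ∈ S
    · exact ⟨a, x, hall, by simpa using hbound⟩
    push_neg at hall
    obtain ⟨i₀, hi₀⟩ := hall
    set T : Set M := S ∪ {z | ∃ j, j ≠ i₀ ∧ x j = z} with hT
    have hTne : T.Nonempty := ⟨base, Or.inl hbS⟩
    have hi₀mem : i₀ ∈ Finset.univ.filter (fun i => x i ∉ S) := by simp [hi₀]
    have hcard' : ((Finset.univ.filter fun i => x i ∉ S).erase i₀).card ≤ n := by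
      rw [Finset.card_erase_of_mem hi₀mem]
      omega
    have hex : ∃ t ∈ T, |a i₀| * dist (x i₀) t < c := by
      by_cases ha : a i₀ = 0
      · exact ⟨base, Or.inl hbS, by simp [ha, hc]⟩
      · have h1 := aux_coeff h S hbS a x γ hγ i₀
        have hpos : 0 < |a i₀| := abs_pos.2 ha
        have h2 : Metric.infDist (x i₀) T < c / |a i₀| := by
          rw [lt_div_iff₀ hpos, mul_comm]
          exact lt_of_le_of_lt h1 hlt
        obtain ⟨t, htT, htd⟩ := (Metric.infDist_lt_iff hTne).1 h2
        refine ⟨t, htT, ?_⟩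
        calc |a i₀| * dist (x i₀) t < |a i₀| * (c / |a i₀|) := by gcongr
          _ = c := by field_simp
    obtain ⟨t, htT, htc⟩ := hex
    have hnorm_move : ∀ z : M, ‖a i₀ • h.toFun (x i₀) - a i₀ • h.toFun z‖ =
        |a i₀| * dist (x i₀) z := by
      intro z
      rw [← smul_sub, norm_smul, Real.norm_eq_abs, h.norm_sub]
    by_cases htS : t ∈ S
    · -- move the point onto S
      set x' := Function.update x i₀ t with hx'
      have hiden : ∑ i, a i • h.toFun (x' i) =
          ∑ i, a i • h.toFun (x i) - a i₀ • h.toFun (x i₀) + a i₀ • h.toFun t :=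
        aux_sum_update h a x i₀ t
      have hdiff : ‖∑ i, a i • h.toFun (x i) - ∑ i, a i • h.toFun (x' i)‖ < c := by
        rw [hiden]
        have : ∑ i, a i • h.toFun (x i) -
            (∑ i, a i • h.toFun (x i) - a i₀ • h.toFun (x i₀) + a i₀ • h.toFun t) =
            a i₀ • h.toFun (x i₀) - a i₀ • h.toFun t := by abel
        rw [this, hnorm_move]
        exact htc
      have hcount : (Finset.univ.filter fun i => x' i ∉ S).card ≤ n := by
        refine le_trans (Finset.card_le_card ?_) hcard'
        intro i hi
        simp only [Finset.mem_filter, Finset.mem_univ, true_and] at hi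
        have hii₀ : i ≠ i₀ := by
          intro hh; rw [hh, hx', Function.update_self] at hi; exact hi htS
        refine Finset.mem_erase.2 ⟨hii₀, ?_⟩
        simp only [Finset.mem_filter, Finset.mem_univ, true_and]
        rwa [hx', Function.update_of_ne hii₀] at hi
      have hlt' : ‖∑ i, a i • h.toFun (x' i) - γ‖ < 2 * c := by
        calc ‖∑ i, a i • h.toFun (x' i) - γ‖
            = ‖(∑ i, a i • h.toFun (x i) - γ) -
                (∑ i, a i • h.toFun (x i) - ∑ i, a i • h.toFun (x' i))‖ := by
              congr 1; abel
          _ ≤ ‖∑ i, a i • h.toFun (x i) - γ‖ +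
                ‖∑ i, a i • h.toFun (x i) - ∑ i, a i • h.toFun (x' i)‖ := norm_sub_le _ _
          _ < c + c := add_lt_add hlt hdiff
          _ = 2 * c := by ring
      obtain ⟨b, y, hyS, hby⟩ := ih a x' γ hγ (2 * c) (by linarith) hlt' hcount
      refine ⟨b, y, hyS, ?_⟩
      calc ‖∑ i, a i • h.toFun (x i) - ∑ i, b i • h.toFun (y i)‖
          ≤ ‖∑ i, a i • h.toFun (x i) - ∑ i, a i • h.toFun (x' i)‖ +
            ‖∑ i, a i • h.toFun (x' i) - ∑ i, b i • h.toFun (y i)‖ := by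
              have : ∑ i, a i • h.toFun (x i) - ∑ i, b i • h.toFun (y i) =
                  (∑ i, a i • h.toFun (x i) - ∑ i, a i • h.toFun (x' i)) +
                  (∑ i, a i • h.toFun (x' i) - ∑ i, b i • h.toFun (y i)) := by abel
              rw [this]; exact norm_add_le _ _
        _ ≤ c + (3 ^ n - 1) * (2 * c) := add_le_add hdiff.le hby
        _ ≤ (3 ^ (n+1) - 1) * c := by
            have h3 : (3:ℝ) ^ (n+1) = 3 * 3 ^ n := by ring
            nlinarith [pow_pos (show (0:ℝ) < 3 by norm_num) n, hc]
    · -- merge into another point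
      have : ∃ j, j ≠ i₀ ∧ x j = t := by
        rcases htT with hl | hr
        · exact absurd hl htS
        · exact hr
      obtain ⟨j, hj, hxj⟩ := this
      set a' := Function.update (Function.update a i₀ 0) j (a j + a i₀) with ha'
      set x' := Function.update x i₀ base with hx'
      have hiden : ∑ i, a' i • h.toFun (x' i) =
          ∑ i, a i • h.toFun (x i) - a i₀ • h.toFun (x i₀) + a i₀ • h.toFun (x j) :=
        aux_sum_merge h a x i₀ j hj
      have hdiff : ‖∑ i, a i • h.toFun (x i) - ∑ i, a' i • h.toFun (x' i)‖ < c := by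
        rw [hiden]
        have : ∑ i, a i • h.toFun (x i) -
            (∑ i, a i • h.toFun (x i) - a i₀ • h.toFun (x i₀) + a i₀ • h.toFun (x j)) =
            a i₀ • h.toFun (x i₀) - a i₀ • h.toFun (x j) := by abel
        rw [this, hnorm_move, hxj]
        exact htc
      have hcount : (Finset.univ.filter fun i => x' i ∉ S).card ≤ n := by
        refine le_trans (Finset.card_le_card ?_) hcard'
        intro i hi
        simp only [Finset.mem_filter, Finset.mem_univ, true_and] at hi
        have hii₀ : i ≠ i₀ := by
          intro hh; rw [hh, hx', Function.update_self] at hi; exact hi hbS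
        refine Finset.mem_erase.2 ⟨hii₀, ?_⟩
        simp only [Finset.mem_filter, Finset.mem_univ, true_and]
        rwa [hx', Function.update_of_ne hii₀] at hi
      have hlt' : ‖∑ i, a' i • h.toFun (x' i) - γ‖ < 2 * c := by
        calc ‖∑ i, a' i • h.toFun (x' i) - γ‖
            = ‖(∑ i, a i • h.toFun (x i) - γ) -
                (∑ i, a i • h.toFun (x i) - ∑ i, a' i • h.toFun (x' i))‖ := by
              congr 1; abel
          _ ≤ ‖∑ i, a i • h.toFun (x i) - γ‖ +
                ‖∑ i, a i • h.toFun (x i) - ∑ i, a' i • h.toFun (x' i)‖ := norm_sub_le _ _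
          _ < c + c := add_lt_add hlt hdiff
          _ = 2 * c := by ring
      obtain ⟨b, y, hyS, hby⟩ := ih a' x' γ hγ (2 * c) (by linarith) hlt' hcount
      refine ⟨b, y, hyS, ?_⟩
      calc ‖∑ i, a i • h.toFun (x i) - ∑ i, b i • h.toFun (y i)‖
          ≤ ‖∑ i, a i • h.toFun (x i) - ∑ i, a' i • h.toFun (x' i)‖ +
            ‖∑ i, a' i • h.toFun (x' i) - ∑ i, b i • h.toFun (y i)‖ := by
              have : ∑ i, a i • h.toFun (x i) - ∑ i, b i • h.toFun (y i) =
                  (∑ i, a i • h.toFun (x i) - ∑ i, a' i • h.toFun (x' i)) +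
                  (∑ i, a' i • h.toFun (x' i) - ∑ i, b i • h.toFun (y i)) := by abel
              rw [this]; exact norm_add_le _ _
        _ ≤ c + (3 ^ n - 1) * (2 * c) := add_le_add hdiff.le hby
        _ ≤ (3 ^ (n+1) - 1) * c := by
            have h3 : (3:ℝ) ^ (n+1) = 3 * 3 ^ n := by ring
            nlinarith [pow_pos (show (0:ℝ) < 3 by norm_num) n, hc]

end Aux4

section Aux5

lemma aux_sep_seq {E : Type*} [MetricSpace E] {W : Set E} (hnt : ¬ TotallyBounded W) :
    ∃ ε₀ : ℝ, 0 < ε₀ ∧ ∃ u : ℕ → E, (∀ n, u n ∈ W) ∧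
      ∀ m n : ℕ, m ≠ n → ε₀ ≤ dist (u m) (u n) := by
  classical
  rw [Metric.totallyBounded_iff] at hnt
  push_neg at hnt
  obtain ⟨ε₀, hε₀, hH⟩ := hnt
  have key : ∀ s : Finset E, ∃ w ∈ W, ∀ y ∈ s, ε₀ ≤ dist w y := by
    intro s
    obtain ⟨w, hwW, hw⟩ := Set.not_subset.1 (hH s s.finite_toSet)
    refine ⟨w, hwW, fun y hy => ?_⟩
    by_contra hlt
    push_neg at hlt
    exact hw (Set.mem_iUnion₂.2 ⟨y, hy, Metric.mem_ball.2 hlt⟩)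
  choose pick hpickW hpick using key
  let fs : ℕ → Finset E := fun n => Nat.rec ∅ (fun _ s => insert (pick s) s) n
  have hfs_succ : ∀ n, fs (n+1) = insert (pick (fs n)) (fs n) := fun n => rfl
  have hmono : ∀ m n, m ≤ n → fs m ⊆ fs n := by
    intro m n hmn
    induction n with
    | zero => have : m = 0 := Nat.le_zero.1 hmn; rw [this]
    | succ n ih =>
      rcases Nat.lt_or_ge m (n+1) with hlt | hge
      · refine (ih (Nat.lt_succ_iff.1 hlt)).trans ?_
        rw [hfs_succ]; exact Finset.subset_insert _ _
      · have : m = n + 1 := le_antisymm hmn hge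
        rw [this]
  refine ⟨ε₀, hε₀, fun n => pick (fs n), fun n => hpickW _, ?_⟩
  have hkey : ∀ m n : ℕ, m < n → ε₀ ≤ dist (pick (fs n)) (pick (fs m)) := by
    intro m n hmn
    apply hpick (fs n)
    have : pick (fs m) ∈ fs (m+1) := by rw [hfs_succ]; exact Finset.mem_insert_self _ _
    exact hmono (m+1) n hmn this
  intro m n hmn
  rcases lt_or_gt_of_ne hmn with hlt | hlt
  · rw [dist_comm]; exact hkey m n hlt
  · exact hkey n m hlt

lemma aux_freq {α : Type*} (T : Finset α) (P : α → ℕ → Prop)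
    (hf : ∃ᶠ n in Filter.atTop, ∃ p ∈ T, P p n) :
    ∃ p ∈ T, ∃ᶠ n in Filter.atTop, P p n := by
  classical
  induction T using Finset.induction_on with
  | empty => simp at hf
  | @insert a s ha ih =>
    have hf' : (∃ᶠ n in Filter.atTop, P a n) ∨ ∃ᶠ n in Filter.atTop, ∃ p ∈ s, P p n := by
      rw [← Filter.frequently_or_distrib]
      refine hf.mono fun n hn => ?_
      obtain ⟨p, hp, hPn⟩ := hn
      rcases Finset.mem_insert.1 hp with rfl | hp'
      · exact Or.inl hPn
      · exact Or.inr ⟨p, hp', hPn⟩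
    rcases hf' with hf' | hf'
    · exact ⟨a, Finset.mem_insert_self _ _, hf'⟩
    · obtain ⟨p, hp, hfp⟩ := ih hf'
      exact ⟨p, Finset.mem_insert_of_mem hp, hfp⟩

lemma aux_subseq_pi {ι X : Type*} [Fintype ι] [MetricSpace X] (K : ι → Set X)
    (hK : ∀ i, IsCompact (K i)) (v : ℕ → ι → X) (hv : ∀ n i, v n i ∈ K i) :
    ∃ (L : ι → X) (s : ℕ → ℕ), StrictMono s ∧ (∀ i, L i ∈ K i) ∧
      ∀ i, Filter.Tendsto (fun n => v (s n) i) Filter.atTop (nhds (L i)) := by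
  have hc : IsCompact (Set.pi Set.univ K) := isCompact_univ_pi hK
  obtain ⟨L, hL, s, hs, hconv⟩ := hc.tendsto_subseq
    (x := v) (fun n => Set.mem_univ_pi.2 fun i => hv n i)
  exact ⟨L, s, hs, fun i => hL i (Set.mem_univ i),
    fun i => (tendsto_pi_nhds.1 hconv i)⟩

end Aux5

set_option maxHeartbeats 3000000 in
/-- a bounded set of elements supported on at most `k` points is
relatively norm-compact iff it is uniformly regular. -/
theorem stmt_11 {M : Type*} [MetricSpace M] [CompleteSpace M] (base : M)
    {F : Type*} [NormedAddCommGroup F] [NormedSpace ℝ F] [CompleteSpace F]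
    (h : FreeSpaceData M base F) (k : ℕ) (hk : 0 < k)
    (W : Set F) (hWb : Bornology.IsBounded W)
    (hWk : ∀ w ∈ W, ∃ (a : Fin k → ℝ) (x : Fin k → M),
      w = ∑ i, a i • h.toFun (x i)) :
    IsCompact (closure W) ↔ h.UniformlyRegular W := by
  classical
  constructor
  · intro hcpt
    refine ⟨hWb, ?_⟩
    intro ε hε U hU
    have htb : TotallyBounded W := hcpt.totallyBounded.subset subset_closure
    obtain ⟨t, htW, htfin, hcov⟩ := totallyBounded_iff_subset.1 htb _
      (Metric.dist_mem_uniformity hε)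
    choose A X hAX using fun (w : F) (hw : w ∈ t) => hWk w (htW hw)
    set X' : F → Fin k → M := fun w => if hw : w ∈ t then X w hw else fun _ => base
      with hX'
    refine ⟨(⋃ w ∈ t, Set.range (X' w)) ∩ U, Set.inter_subset_right, ?_, ?_⟩
    · apply Set.Finite.isCompact
      exact ((htfin.biUnion fun w _ => Set.finite_range _).inter_of_left U)
    · intro v hv
      obtain ⟨w, hw, hvw⟩ := Set.mem_iUnion₂.1 (hcov hv)
      have hwrep : w = ∑ i, A w hw i • h.toFun (X w hw i) := hAX w hw
      have hwmem : w ∈ h.freeSub ((⋃ w ∈ t, Set.range (X' w)) ∩ U ∪ Uᶜ) := by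
        rw [hwrep]
        apply Submodule.sum_mem
        intro i _
        apply Submodule.smul_mem
        apply aux_mem_freeSub
        left
        by_cases hXU : X w hw i ∈ U
        · left
          refine ⟨Set.mem_iUnion₂.2 ⟨w, hw, ⟨i, ?_⟩⟩, hXU⟩
          rw [hX']; simp [hw]
        · exact Or.inr hXU
      have : v = w + (v - w) := by abel
      rw [this]
      apply Set.add_mem_add hwmem
      rw [Metric.mem_closedBall, dist_zero_right]
      have : dist v w < ε := hvw
      rw [dist_eq_norm] at this
      exact this.le
  · rintro ⟨-, hreg⟩
    have htb : TotallyBounded W := by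
      by_contra hnt
      obtain ⟨ε₀, hε₀, u, huW, husep⟩ := aux_sep_seq hnt
      obtain ⟨R, hR⟩ := hWb.exists_norm_le
      have hR0 : 0 ≤ R := le_trans (norm_nonneg _) (hR _ (huW 0))
      have hk1 : (1:ℝ) ≤ k := by exact_mod_cast hk
      set c₀ : ℝ := ε₀ / (8 * (k + 1)) with hc₀def
      have hc₀ : 0 < c₀ := by positivity
      set η : ℝ := c₀ / (16 * 3 ^ k) with hηdef
      have hη : 0 < η := by positivity
      set β : ℝ := (3 ^ k - 1) * (2 * η) with hβdef
      have h3k1 : (1:ℝ) ≤ 3 ^ k := one_le_pow₀ (by norm_num)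
      have hβ0 : 0 ≤ β := by nlinarith
      have hβc : β ≤ c₀ / 8 := by
        have h3kp : (0:ℝ) < 3 ^ k := by positivity
        have h1 : β ≤ 3 ^ k * (2 * η) := by rw [hβdef]; nlinarith
        have h2 : (3:ℝ) ^ k * (2 * η) = c₀ / 8 := by rw [hηdef]; field_simp; ring
        linarith
      have hc₀ε : c₀ ≤ ε₀ / 16 := by
        rw [hc₀def, div_le_div_iff₀ (by positivity) (by norm_num)]
        nlinarith
      -- Step 1: compact set K₀ approximating W globally
      obtain ⟨K, -, hKcpt, hKsub⟩ := hreg η hη Set.univ isOpen_univ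
      set K₀ : Set M := K ∪ {base} with hK₀
      have hbK₀ : base ∈ K₀ := Or.inr rfl
      have hK₀cpt : IsCompact K₀ := hKcpt.union isCompact_singleton
      have hsub' : W ⊆ ↑(h.freeSub K₀) + Metric.closedBall (0:F) η := by
        refine hKsub.trans (Set.add_subset_add_right ?_)
        intro z hz
        refine aux_freeSub_mono h ?_ hz
        rw [Set.compl_univ, Set.union_empty, hK₀]
        exact Set.subset_union_left
      -- Step 2: reduce each u n to a combination with points in K₀
      have hrep : ∀ n : ℕ, ∃ (bb : Fin k → ℝ) (yy : Fin k → M), (∀ i, yy i ∈ K₀) ∧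
          ‖u n - ∑ i, bb i • h.toFun (yy i)‖ ≤ β := by
        intro n
        obtain ⟨γ, hγ, e, he, hsum⟩ := Set.mem_add.1 (hsub' (huW n))
        obtain ⟨a, x, hax⟩ := hWk (u n) (huW n)
        have hlt : ‖∑ i, a i • h.toFun (x i) - γ‖ < 2 * η := by
          rw [← hax]
          have he2 : u n - γ = e := by rw [← hsum]; abel
          rw [he2]
          have := Metric.mem_closedBall.1 he
          rw [dist_zero_right] at this
          linarith
        obtain ⟨bb, yy, hyK, hby⟩ := aux_reduce h K₀ hbK₀ k a x γ hγ (2*η)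
          (by linarith) hlt
          (le_trans (Finset.card_le_univ _) (by simp))
        refine ⟨bb, yy, hyK, ?_⟩
        rw [hax]
        exact hby.trans (le_of_eq (by rw [hβdef]))
      choose b y hyK hby using hrep
      -- Extraction 1: points converge
      obtain ⟨Y, s₁, hs₁, hYK, hYconv⟩ := aux_subseq_pi (fun _ : Fin k => K₀)
        (fun _ => hK₀cpt) y (fun n i => hyK n i)
      -- limit points and separation radius
      set T' : Finset M := Finset.image Y Finset.univ ∪ {base} with hT'
      have hbaseT' : base ∈ T' := by
        rw [hT']; exact Finset.mem_union_right _ (Finset.mem_singleton_self _)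
      have hYT' : ∀ i, Y i ∈ T' := fun i => by
        rw [hT']
        exact Finset.mem_union_left _ (Finset.mem_image_of_mem Y (Finset.mem_univ i))
      obtain ⟨r₀, hr₀pos, hr₀4⟩ : ∃ r₀ : ℝ, 0 < r₀ ∧
          ∀ p ∈ T', ∀ q ∈ T', p ≠ q → 4 * r₀ ≤ dist p q := by
        set P : Finset (M × M) := (T' ×ˢ T').filter (fun q => q.1 ≠ q.2) with hP
        by_cases hPne : P.Nonempty
        · have hPine : (P.image fun q => dist q.1 q.2).Nonempty := hPne.image _
          refine ⟨(P.image fun q => dist q.1 q.2).min' hPine / 4, ?_, ?_⟩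
          · have hall : ∀ d ∈ P.image (fun q => dist q.1 q.2), 0 < d := by
              rintro d hd
              obtain ⟨q, hq, rfl⟩ := Finset.mem_image.1 hd
              exact dist_pos.2 (Finset.mem_filter.1 hq).2
            have := (Finset.lt_min'_iff _ hPine).2 hall
            linarith
          · intro p hp q hq hpq
            have hqP : (p, q) ∈ P := Finset.mem_filter.2 ⟨Finset.mem_product.2 ⟨hp, hq⟩, hpq⟩
            have := Finset.min'_le _ _ (Finset.mem_image_of_mem (fun q => dist q.1 q.2) hqP)
            simpa using by linarith
        · refine ⟨1, one_pos, fun p hp q hq hpq => ?_⟩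
          exact absurd ⟨(p,q), Finset.mem_filter.2 ⟨Finset.mem_product.2 ⟨hp, hq⟩, hpq⟩⟩ hPne
      -- eventual closeness of points at stage 1
      obtain ⟨N₀, hN₀⟩ : ∃ N₀ : ℕ, ∀ n ≥ N₀, ∀ i, dist (y (s₁ n) i) (Y i) < r₀ := by
        have : ∀ᶠ n in Filter.atTop, ∀ i, dist (y (s₁ n) i) (Y i) < r₀ := by
          rw [Filter.eventually_all]
          intro i
          have := Metric.tendsto_atTop.1 (hYconv i) r₀ hr₀pos
          obtain ⟨N, hN⟩ := this
          exact Filter.eventually_atTop.2 ⟨N, fun n hn => hN n hn⟩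
        exact Filter.eventually_atTop.1 this
      -- bound on cluster sums
      set Cb : ℝ := (R + β) / r₀ with hCbdef
      set τ : ℕ → Fin k → ℝ := fun n i =>
        if Y i = base then 0
        else ∑ j ∈ Finset.univ.filter (fun j => Y j = Y i), b (s₁ n) j with hτdef
      have hw1norm : ∀ n : ℕ, ‖∑ i, b (s₁ n) i • h.toFun (y (s₁ n) i)‖ ≤ R + β := by
        intro n
        have h1 := hby (s₁ n)
        have h2 := hR _ (huW (s₁ n))
        calc ‖∑ i, b (s₁ n) i • h.toFun (y (s₁ n) i)‖
            ≤ ‖u (s₁ n)‖ + ‖u (s₁ n) - ∑ i, b (s₁ n) i • h.toFun (y (s₁ n) i)‖ :=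
              aux_norm_tri _ _
          _ ≤ R + β := add_le_add h2 h1
      have hτbound : ∀ n ≥ N₀, ∀ i, |τ n i| ≤ Cb := by
        intro n hn i
        by_cases hYb : Y i = base
        · have : τ n i = 0 := by simp [hτdef, hYb]
          rw [this, abs_zero, hCbdef]; positivity
        · have hτeq : τ n i = ∑ j ∈ Finset.univ.filter (fun j => Y j = Y i), b (s₁ n) j := by
            simp only [hτdef]; rw [if_neg hYb]
          rw [hτeq]
          set p : M := Y i with hpdef
          set gp : M → ℝ := fun z => min r₀ (max 0 (2*r₀ - dist z p)) with hgpdef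
          have hgplip : LipschitzWith 1 gp := by
            have := (LipschitzWith.const (α := M) r₀).min (aux_lip_radial (2*r₀) p)
            exact this.weaken (by norm_num)
          have hgpfar : ∀ z : M, 2*r₀ ≤ dist z p → gp z = 0 := by
            intro z hz
            rw [hgpdef]
            simp only
            rw [max_eq_left (by linarith), min_eq_right hr₀pos.le]
          have hgpnear : ∀ z : M, dist z p ≤ r₀ → gp z = r₀ := by
            intro z hz
            rw [hgpdef]
            simp only
            rw [max_eq_right (by linarith), min_eq_left (by linarith)]
          have hgpbase : gp base = 0 := by
            apply hgpfar
            have := hr₀4 base hbaseT' p (hYT' i) (fun hc => hYb hc.symm)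
            linarith
          obtain ⟨ψ, hψn, hψx⟩ := h.extend 1 gp hgplip hgpbase
          have heval : ψ (∑ j, b (s₁ n) j • h.toFun (y (s₁ n) j)) =
              r₀ * ∑ j ∈ Finset.univ.filter (fun j => Y j = Y i), b (s₁ n) j := by
            rw [aux_eval_sum h ψ gp hψx]
            rw [← Finset.sum_filter_add_sum_filter_not Finset.univ (fun j => Y j = Y i)]
            have hz2 : ∀ j ∈ Finset.univ.filter (fun j => ¬ Y j = Y i),
                b (s₁ n) j * gp (y (s₁ n) j) = 0 := by
              intro j hj
              have hYj : Y j ≠ Y i := by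
                simpa using (Finset.mem_filter.1 hj).2
              have h4 : 4 * r₀ ≤ dist (Y j) p := hr₀4 _ (hYT' j) _ (hYT' i) hYj
              have h5 : 2*r₀ ≤ dist (y (s₁ n) j) p := by
                have h6 := hN₀ n hn j
                have h7 := dist_triangle (Y j) (y (s₁ n) j) p
                rw [dist_comm (Y j) (y (s₁ n) j)] at h7
                linarith
              rw [hgpfar _ h5, mul_zero]
            rw [Finset.sum_eq_zero hz2, add_zero, Finset.mul_sum]
            apply Finset.sum_congr rfl
            intro j hj
            have hYj : Y j = Y i := by simpa using (Finset.mem_filter.1 hj).2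
            have h5 : dist (y (s₁ n) j) p ≤ r₀ := by
              have h6 := hN₀ n hn j
              rw [hYj] at h6
              exact h6.le
            rw [hgpnear _ h5]; ring
          have habs : |ψ (∑ j, b (s₁ n) j • h.toFun (y (s₁ n) j))| ≤ R + β := by
            calc |ψ _| ≤ ‖ψ‖ * ‖∑ j, b (s₁ n) j • h.toFun (y (s₁ n) j)‖ := ψ.le_opNorm _
              _ ≤ 1 * (R + β) := by
                  apply mul_le_mul (hψn.trans (by norm_num)) (hw1norm n) (norm_nonneg _)
                    zero_le_one
              _ = R + β := one_mul _
          rw [heval] at habs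
          rw [abs_mul, abs_of_pos hr₀pos] at habs
          rw [hCbdef, le_div_iff₀ hr₀pos]
          calc |∑ j ∈ Finset.univ.filter (fun j => Y j = Y i), b (s₁ n) j| * r₀
              = r₀ * |∑ j ∈ Finset.univ.filter (fun j => Y j = Y i), b (s₁ n) j| := mul_comm _ _
            _ ≤ R + β := habs
      -- Extraction 2: cluster sums converge
      obtain ⟨Λ, s₂, hs₂, -, hΛconv⟩ := aux_subseq_pi (fun _ : Fin k => Set.Icc (-Cb) Cb)
        (fun _ => isCompact_Icc) (fun n => τ (n + N₀))
        (fun n i => Set.mem_Icc.2 (abs_le.1 (hτbound (n + N₀) (Nat.le_add_left _ _) i)))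
      -- final subsequence
      set sF : ℕ → ℕ := fun n => s₁ (s₂ n + N₀) with hsFdef
      have hsFmono : StrictMono sF := fun a b hab => hs₁ (Nat.add_lt_add_right (hs₂ hab) N₀)
      set B : ℕ → Fin k → ℝ := fun n => b (sF n) with hBdef
      set yF : ℕ → Fin k → M := fun n => y (sF n) with hyFdef
      set w' : ℕ → F := fun n => ∑ i, B n i • h.toFun (yF n i) with hw'def
      have hclose : ∀ n, ‖u (sF n) - w' n‖ ≤ β := fun n => hby (sF n)
      have husepF : ∀ m n, m ≠ n → ε₀ ≤ ‖u (sF m) - u (sF n)‖ := by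
        intro m n hmn
        rw [← dist_eq_norm]
        exact husep _ _ (fun hcon => hmn (hsFmono.injective hcon))
      have hnear : ∀ n i, dist (yF n i) (Y i) < r₀ := by
        intro n i
        exact hN₀ (s₂ n + N₀) (Nat.le_add_left _ _) i
      have hτconv : ∀ i, Filter.Tendsto (fun n => τ (s₂ n + N₀) i) Filter.atTop (nhds (Λ i)) :=
        hΛconv
      have hYFconv : ∀ i, Filter.Tendsto (fun n => yF n i) Filter.atTop (nhds (Y i)) := by
        intro i
        have hmono2 : StrictMono (fun n => s₂ n + N₀) :=
          fun a b hab => Nat.add_lt_add_right (hs₂ hab) N₀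
        exact (hYconv i).comp hmono2.tendsto_atTop
      -- cluster decomposition
      set TY : Finset M := Finset.image Y Finset.univ with hTYdef
      have hTYsubT' : TY ⊆ T' := by rw [hT']; exact Finset.subset_union_left
      set σn : ℕ → M → ℝ :=
        fun n p => ∑ j ∈ Finset.univ.filter (fun j => Y j = p), B n j with hσdef
      set un : ℕ → M → F := fun n p =>
        ∑ j ∈ Finset.univ.filter (fun j => Y j = p), B n j • (h.toFun (yF n j) - h.toFun p)
        with hundef
      set cf : ℕ → M → ℝ := fun n p => if p = base then 0 else σn n p with hcfdef
      have hdecomp : ∀ n, w' n = (∑ p ∈ TY, un n p) + ∑ p ∈ TY, cf n p • h.toFun p := by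
        intro n
        have hfib : ∑ p ∈ TY, ∑ j ∈ Finset.univ.filter (fun j => Y j = p),
            B n j • h.toFun (yF n j) = ∑ j, B n j • h.toFun (yF n j) :=
          Finset.sum_fiberwise_of_maps_to
            (fun j _ => Finset.mem_image_of_mem Y (Finset.mem_univ j)) _
        have hterm : ∀ p ∈ TY, un n p + cf n p • h.toFun p =
            ∑ j ∈ Finset.univ.filter (fun j => Y j = p), B n j • h.toFun (yF n j) := by
          intro p hp
          have h1 : un n p =
              (∑ j ∈ Finset.univ.filter (fun j => Y j = p), B n j • h.toFun (yF n j))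
                - σn n p • h.toFun p := by
            simp only [hundef, hσdef, smul_sub, Finset.sum_sub_distrib, Finset.sum_smul]
          have h2 : cf n p • h.toFun p = σn n p • h.toFun p := by
            by_cases hpb : p = base
            · simp only [hcfdef, if_pos hpb, hpb, h.map_base, smul_zero]
            · simp only [hcfdef, if_neg hpb]
          rw [h1, h2]
          abel
        calc w' n = ∑ j, B n j • h.toFun (yF n j) := by rw [hw'def]
          _ = ∑ p ∈ TY, ∑ j ∈ Finset.univ.filter (fun j => Y j = p),
                B n j • h.toFun (yF n j) := hfib.symm
          _ = ∑ p ∈ TY, (un n p + cf n p • h.toFun p) := (Finset.sum_congr rfl hterm).symm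
          _ = _ := Finset.sum_add_distrib
      -- convergence of the coarse parts
      have hcfconv : ∀ p : M, ∃ l : ℝ, Filter.Tendsto (fun n => cf n p) Filter.atTop (nhds l) := by
        intro p
        by_cases hpb : p = base
        · refine ⟨0, ?_⟩
          have heq : (fun n => cf n p) = fun _ => (0:ℝ) := by
            funext n; simp only [hcfdef, if_pos hpb]
          rw [heq]; exact tendsto_const_nhds
        · by_cases hpY : ∃ i, Y i = p
          · obtain ⟨i, hi⟩ := hpY
            refine ⟨Λ i, ?_⟩
            have heq : (fun n => cf n p) = fun n => τ (s₂ n + N₀) i := by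
              funext n
              simp only [hcfdef, hτdef, hσdef, hBdef, hsFdef, hi, if_neg hpb]
            rw [heq]; exact hτconv i
          · refine ⟨0, ?_⟩
            have hfe : Finset.univ.filter (fun j => Y j = p) = ∅ :=
              Finset.filter_eq_empty_iff.2 (fun {j} _ hc => hpY ⟨j, hc⟩)
            have heq : (fun n => cf n p) = fun _ => (0:ℝ) := by
              funext n
              simp only [hcfdef, hσdef, if_neg hpb, hfe, Finset.sum_empty]
            rw [heq]; exact tendsto_const_nhds
      choose Lp hLp using hcfconv
      have hconvC : Filter.Tendsto (fun n => ∑ p ∈ TY, cf n p • h.toFun p) Filter.atTop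
          (nhds (∑ p ∈ TY, Lp p • h.toFun p)) :=
        tendsto_finset_sum _ (fun p _ => (hLp p).smul_const _)
      obtain ⟨N, hNc⟩ := Metric.cauchySeq_iff.1 hconvC.cauchySeq (ε₀/8) (by positivity)
      -- some cluster stays large along a subsequence
      have hTYk : (TY.card : ℝ) ≤ (k:ℝ) := by
        have h1 := Finset.card_image_le (f := Y) (s := Finset.univ)
        have h2 : (Finset.univ : Finset (Fin k)).card = k := by simp
        rw [hTYdef]
        exact_mod_cast le_trans h1 (le_of_eq h2)
      have hkey : ∀ m n, N ≤ m → N ≤ n → m ≠ n → ∃ p ∈ TY, 2 * c₀ ≤ ‖un m p - un n p‖ := by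
        intro m n hm hn hmn
        by_contra hcon
        push_neg at hcon
        have hsumb : ∑ p ∈ TY, ‖un m p - un n p‖ ≤ (TY.card : ℝ) * (2 * c₀) := by
          have := Finset.sum_le_card_nsmul TY (fun p => ‖un m p - un n p‖) (2*c₀)
            (fun p hp => (hcon p hp).le)
          simpa [nsmul_eq_mul] using this
        have hv : ‖(∑ p ∈ TY, un m p) - ∑ p ∈ TY, un n p‖ ≤ (k:ℝ) * (2*c₀) := by
          rw [← Finset.sum_sub_distrib]
          refine le_trans (norm_sum_le _ _) (le_trans hsumb ?_)
          exact mul_le_mul_of_nonneg_right hTYk (by positivity)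
        have hw'sep : ε₀ - 2*β ≤ ‖w' m - w' n‖ := by
          have h1 := husepF m n hmn
          have h2 := hclose m
          have h3 := hclose n
          have h5 : ‖u (sF m) - u (sF n)‖ ≤
              ‖u (sF m) - w' m‖ + ‖w' m - w' n‖ + ‖w' n - u (sF n)‖ := by
            have e : u (sF m) - u (sF n) =
                (u (sF m) - w' m) + (w' m - w' n) + (w' n - u (sF n)) := by abel
            rw [e]
            exact norm_add₃_le
          have h4 : ‖w' n - u (sF n)‖ = ‖u (sF n) - w' n‖ := norm_sub_rev _ _
          linarith
        have hcd := hNc m hm n hn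
        rw [dist_eq_norm] at hcd
        have hlow : ε₀ - 2*β - ε₀/8 ≤ ‖(∑ p ∈ TY, un m p) - ∑ p ∈ TY, un n p‖ := by
          have e : (∑ p ∈ TY, un m p) - ∑ p ∈ TY, un n p =
              (w' m - w' n) -
              ((∑ p ∈ TY, cf m p • h.toFun p) - ∑ p ∈ TY, cf n p • h.toFun p) := by
            rw [hdecomp m, hdecomp n]; abel
          rw [e]
          have h6 := norm_sub_norm_le (w' m - w' n)
            ((∑ p ∈ TY, cf m p • h.toFun p) - ∑ p ∈ TY, cf n p • h.toFun p)
          linarith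
        have hnum : (k:ℝ) * (2*c₀) ≤ ε₀/4 := by
          rw [hc₀def]
          have hkp : (0:ℝ) < (k:ℝ) + 1 := by positivity
          have e : (k:ℝ) * (2 * (ε₀/(8*((k:ℝ)+1)))) = (ε₀/4) * ((k:ℝ)/((k:ℝ)+1)) := by
            field_simp; ring
          have hle1 : (k:ℝ)/((k:ℝ)+1) ≤ 1 := by
            rw [div_le_one hkp]; linarith
          rw [e]
          nlinarith
        linarith
      have hfreq : ∃ᶠ n in Filter.atTop, ∃ p ∈ TY, c₀ ≤ ‖un n p‖ := by
        rw [Filter.frequently_atTop]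
        intro N'
        obtain ⟨p, hp, h2c⟩ := hkey (max N N' + 1) (max N N')
          (le_trans (le_max_left _ _) (Nat.le_succ _)) (le_max_left _ _) (by omega)
        rcases le_or_gt c₀ ‖un (max N N') p‖ with hcc | hcc
        · exact ⟨max N N', le_max_right _ _, p, hp, hcc⟩
        · refine ⟨max N N' + 1, le_trans (le_max_right _ _) (Nat.le_succ _), p, hp, ?_⟩
          have h7 := norm_sub_le (un (max N N' + 1) p) (un (max N N') p)
          by_contra hcc2
          push_neg at hcc2
          linarith
      obtain ⟨pstar, hpstarTY, hfreqp⟩ := aux_freq TY (fun p n => c₀ ≤ ‖un n p‖) hfreq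
      have hpstarT' : pstar ∈ T' := hTYsubT' hpstarTY
      -- the punctured ball around pstar and the regularity data there
      set V : Set M := Metric.ball pstar r₀ \ {pstar} with hVdef
      have hVopen : IsOpen V := Metric.isOpen_ball.sdiff isClosed_singleton
      obtain ⟨K₁, hK₁V, hK₁cpt, hK₁sub⟩ := hreg (c₀/4) (by positivity) V hVopen
      have hpstarV : pstar ∉ V := fun hcon => hcon.2 rfl
      obtain ⟨r', hr'pos, hr'r₀, hr'K₁⟩ : ∃ r' : ℝ, 0 < r' ∧ r' ≤ r₀ ∧
          ∀ z ∈ K₁, r' ≤ dist z pstar := by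
        by_cases hK1 : K₁.Nonempty
        · obtain ⟨z₀, hz₀K, hz₀d⟩ := hK₁cpt.exists_infDist_eq_dist hK1 pstar
          have hz₀ne : pstar ≠ z₀ := by
            intro hcon
            exact hpstarV (hK₁V (hcon ▸ hz₀K))
          have hz₀pos : 0 < dist pstar z₀ := dist_pos.2 hz₀ne
          refine ⟨min (Metric.infDist pstar K₁) r₀, ?_, min_le_right _ _, ?_⟩
          · apply lt_min _ hr₀pos
            rw [hz₀d]; exact hz₀pos
          · intro z hz
            calc min (Metric.infDist pstar K₁) r₀ ≤ Metric.infDist pstar K₁ :=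
                min_le_left _ _
              _ ≤ dist pstar z := Metric.infDist_le_dist_of_mem hz
              _ = dist z pstar := dist_comm _ _
        · exact ⟨r₀, hr₀pos, le_refl _, fun z hz => absurd ⟨z, hz⟩ hK1⟩
      -- eventually all cluster points are r'/4 close
      have hevAll : ∀ᶠ n in Filter.atTop, ∀ i, Y i = pstar → dist (yF n i) pstar ≤ r'/4 := by
        rw [Filter.eventually_all]
        intro i
        by_cases hi : Y i = pstar
        · obtain ⟨N1, hN1⟩ := Metric.tendsto_atTop.1 (hYFconv i) (r'/4) (by positivity)
          refine Filter.eventually_atTop.2 ⟨N1, fun n hn _ => ?_⟩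
          have := hN1 n hn
          rw [hi] at this
          exact this.le
        · exact Filter.Eventually.of_forall (fun n hi' => absurd hi' hi)
      obtain ⟨n, hcn, hn1⟩ := (hfreqp.and_eventually hevAll).exists
      -- geometry: points of other clusters stay r'-far from pstar
      have hfar : ∀ j : Fin k, Y j ≠ pstar → r' ≤ dist (yF n j) pstar := by
        intro j hj
        have h4 : 4 * r₀ ≤ dist (Y j) pstar := hr₀4 _ (hYT' j) _ hpstarT' hj
        have h6 := hnear n j
        have h7 := dist_triangle (Y j) (yF n j) pstar
        rw [dist_comm (Y j) (yF n j)] at h7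
        linarith
      -- norming functional for the distinguished cluster part
      have hune : un n pstar ≠ 0 := by
        intro hcon
        rw [hcon, norm_zero] at hcn
        linarith
      obtain ⟨φ, hφn, hφu⟩ := exists_dual_vector ℝ (un n pstar) (norm_ne_zero_iff.2 hune)
      set h₀ : M → ℝ := fun z => φ (h.toFun z) - φ (h.toFun pstar) with hh₀def
      have hh₀bound : ∀ z : M, |h₀ z| ≤ dist z pstar := by
        intro z
        have e : h₀ z = φ (h.toFun z - h.toFun pstar) := by
          simp only [hh₀def, map_sub]
        rw [e]
        calc |φ (h.toFun z - h.toFun pstar)| ≤ ‖φ‖ * ‖h.toFun z - h.toFun pstar‖ :=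
            φ.le_opNorm _
          _ = dist z pstar := by rw [hφn, h.norm_sub, one_mul]
      have hh₀lip : LipschitzWith 1 h₀ := by
        apply LipschitzWith.of_dist_le_mul
        intro z w
        have e : h₀ z - h₀ w = φ (h.toFun z - h.toFun w) := by
          simp only [hh₀def, map_sub]; ring
        rw [NNReal.coe_one, one_mul, Real.dist_eq, e]
        calc |φ (h.toFun z - h.toFun w)| ≤ ‖φ‖ * ‖h.toFun z - h.toFun w‖ := φ.le_opNorm _
          _ = dist z w := by rw [hφn, h.norm_sub, one_mul]
      set mf : M → ℝ := fun z => max 0 (r' - dist z pstar) with hmfdef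
      have hmflip : LipschitzWith 1 mf := aux_lip_radial r' pstar
      have hmfneg : LipschitzWith 1 (fun z => -(mf z)) := by
        apply LipschitzWith.of_dist_le_mul
        intro z w
        rw [dist_neg_neg]
        exact hmflip.dist_le_mul z w
      set g : M → ℝ := fun z => max (-(mf z)) (min (h₀ z) (mf z)) with hgdef
      have hglip : LipschitzWith 1 g := by
        have := hmfneg.max (hh₀lip.min hmflip)
        exact this.weaken (by norm_num)
      have hmf_nonneg : ∀ z, 0 ≤ mf z := fun z => le_max_left _ _
      have hgzero : ∀ z, r' ≤ dist z pstar → g z = 0 := by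
        intro z hz
        have hmf0 : mf z = 0 := by
          simp only [hmfdef]
          rw [max_eq_left (by linarith)]
        simp only [hgdef, hmf0, neg_zero]
        rw [max_eq_left (min_le_right _ _)]
      have hgpstar : g pstar = 0 := by
        have hh0 : h₀ pstar = 0 := by simp [hh₀def]
        simp only [hgdef, hh0]
        rw [min_eq_left (hmf_nonneg _)]
        rw [max_eq_right (neg_nonpos.2 (hmf_nonneg _))]
      have hgS : ∀ z ∈ K₁ ∪ Vᶜ, g z = 0 := by
        intro z hz
        rcases hz with hz | hz
        · exact hgzero z (hr'K₁ z hz)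
        · by_cases hzp : z = pstar
          · rw [hzp]; exact hgpstar
          · have : z ∉ Metric.ball pstar r₀ := fun hb => hz ⟨hb, hzp⟩
            rw [Metric.mem_ball] at this
            push_neg at this
            exact hgzero z (le_trans hr'r₀ this)
      have hgbase : g base = 0 := by
        by_cases hpb : pstar = base
        · rw [show base = pstar from hpb.symm]
          exact hgpstar
        · have h4 : 4 * r₀ ≤ dist base pstar :=
            hr₀4 base hbaseT' pstar hpstarT' (fun hc => hpb hc.symm)
          exact hgzero base (by linarith)
      have hgnear : ∀ z, dist z pstar ≤ r'/4 → g z = h₀ z := by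
        intro z hz
        have hb := hh₀bound z
        have habs := abs_le.1 hb
        have hmfz : mf z = r' - dist z pstar := by
          simp only [hmfdef]
          rw [max_eq_right (by linarith)]
        have h1 : h₀ z ≤ mf z := by rw [hmfz]; linarith [dist_nonneg (x := z) (y := pstar)]
        have h2 : -(mf z) ≤ h₀ z := by rw [hmfz]; linarith [dist_nonneg (x := z) (y := pstar)]
        simp only [hgdef]
        rw [min_eq_left h1, max_eq_right h2]
      obtain ⟨ψ, hψn, hψx, hψ0⟩ := aux_exists_functional h (K₁ ∪ Vᶜ) 1 g hglip hgbase hgS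
      -- evaluation of ψ on w' n
      have heval : ψ (w' n) = ‖un n pstar‖ := by
        have e0 : ψ (w' n) = ∑ j, B n j * g (yF n j) := by
          rw [hw'def]
          exact aux_eval_sum h ψ g hψx (B n) (yF n)
        rw [e0]
        rw [← Finset.sum_filter_add_sum_filter_not Finset.univ (fun j => Y j = pstar)]
        have hz2 : ∀ j ∈ Finset.univ.filter (fun j => ¬ Y j = pstar),
            B n j * g (yF n j) = 0 := by
          intro j hj
          have hYj : Y j ≠ pstar := by simpa using (Finset.mem_filter.1 hj).2
          rw [hgzero _ (hfar j hYj), mul_zero]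
        rw [Finset.sum_eq_zero hz2, add_zero]
        have hz1 : ∀ j ∈ Finset.univ.filter (fun j => Y j = pstar),
            B n j * g (yF n j) = B n j * h₀ (yF n j) := by
          intro j hj
          have hYj : Y j = pstar := by simpa using (Finset.mem_filter.1 hj).2
          rw [hgnear _ (hn1 j hYj)]
        rw [Finset.sum_congr rfl hz1]
        have e1 : φ (un n pstar) = ∑ j ∈ Finset.univ.filter (fun j => Y j = pstar),
            B n j * h₀ (yF n j) := by
          simp only [hundef]
          rw [map_sum]
          apply Finset.sum_congr rfl
          intro j hj
          rw [map_smul, smul_eq_mul, map_sub]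
        rw [← e1, hφu]
        norm_num
      -- contradiction with regularity
      obtain ⟨γ', hγ', e', he', hsum'⟩ := Set.mem_add.1 (hK₁sub (huW (sF n)))
      have hψu : |ψ (u (sF n))| ≤ c₀/4 := by
        rw [← hsum', map_add, hψ0 γ' hγ', zero_add]
        have he'n : ‖e'‖ ≤ c₀/4 := by
          have := Metric.mem_closedBall.1 he'
          rwa [dist_zero_right] at this
        calc |ψ e'| ≤ ‖ψ‖ * ‖e'‖ := ψ.le_opNorm _
          _ ≤ 1 * (c₀/4) :=
            mul_le_mul (hψn.trans (by norm_num)) he'n (norm_nonneg _) zero_le_one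
          _ = c₀/4 := one_mul _
      have hfinal : c₀ ≤ c₀/4 + c₀/8 := by
        have hstep1 : c₀ ≤ ψ (w' n) := by rw [heval]; exact hcn
        have hstep2 : |ψ (w' n) - ψ (u (sF n))| ≤ β := by
          rw [← map_sub]
          calc |ψ (w' n - u (sF n))| ≤ ‖ψ‖ * ‖w' n - u (sF n)‖ := ψ.le_opNorm _
            _ ≤ 1 * β := by
                apply mul_le_mul (hψn.trans (by norm_num)) ?_ (norm_nonneg _) zero_le_one
                rw [norm_sub_rev]
                exact hclose n
            _ = β := one_mul _
        have habs1 := abs_le.1 hstep2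
        have habs2 := abs_le.1 hψu
        linarith [hβc]
      linarith



    exact TotallyBounded.isCompact_of_isClosed htb.closure isClosed_closure
end
end

section
/- Let M be a metric space, let δ, ε > 0, R ≥ 1, let n be a positive integer, let a_1,…,a_n ∈ ℝ and x_i ≠ y_i ∈ M (1 ≤ i ≤ n) satisfy ∑_{i=1}^n |a_i| ≤ R, and suppose that for every subset I ⊆ {1,…,n} with ∑_{i∈I} d(x_i, y_i) < δ one has ∑_{i∈I} |a_i| < ε. For every i, let (u_1^i, …, u_{k_i+1}^i) be a partition of the couple (x_i, y_i), i.e., a finite sequence of pairwise distinct points of M with u_1^i = x_i, u_{k_i+1}^i = y_i, and ∑_{j=1}^{k_i} d(u_j^i, u_{j+1}^i) = d(x_i, y_i). Then for every set 𝓘 ⊆ {(i,j) : 1 ≤ i ≤ n, 1 ≤ j ≤ k_i} with ∑_{(i,j)∈𝓘} d(u_j^i, u_{j+1}^i) < δε/R, one has ∑_{(i,j)∈𝓘} |a_i|·d(u_j^i, u_{j+1}^i)/d(x_i, y_i) < 3ε + 4ε²/R. -/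
open Metric Set Filter Pointwise

noncomputable section

/-- refinement lemma for convex sums of molecules under partitions of
couples of points. Here `u i : Fin (k i + 1) → M` lists the `k i + 1` points
`u_1^i, …, u_{k_i+1}^i` of a partition of `(x i, y i)` into `k i` segments. -/
theorem stmt_14 {M : Type*} [MetricSpace M]
    (δ ε R : ℝ) (hδ : 0 < δ) (hε : 0 < ε) (hR : 1 ≤ R)
    (n : ℕ) (hn : 0 < n) (a : Fin n → ℝ) (x y : Fin n → M) (hxy : ∀ i, x i ≠ y i)
    (haR : ∑ i, |a i| ≤ R)
    (hsmall : ∀ I : Finset (Fin n),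
      ∑ i ∈ I, dist (x i) (y i) < δ → ∑ i ∈ I, |a i| < ε)
    (k : Fin n → ℕ) (u : (i : Fin n) → Fin (k i + 1) → M)
    (huinj : ∀ i, Function.Injective (u i))
    (hufirst : ∀ i, u i 0 = x i) (hulast : ∀ i, u i (Fin.last (k i)) = y i)
    (hupart : ∀ i, ∑ j : Fin (k i), dist (u i j.castSucc) (u i j.succ) = dist (x i) (y i))
    (𝓘 : Finset ((i : Fin n) × Fin (k i)))
    (h𝓘 : ∑ p ∈ 𝓘, dist (u p.1 p.2.castSucc) (u p.1 p.2.succ) < δ * ε / R) :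
    ∑ p ∈ 𝓘, |a p.1| * (dist (u p.1 p.2.castSucc) (u p.1 p.2.succ) / dist (x p.1) (y p.1))
      < 3 * ε + 4 * ε ^ 2 / R := by
  classical
  set term : ((i : Fin n) × Fin (k i)) → ℝ :=
    fun p => dist (u p.1 p.2.castSucc) (u p.1 p.2.succ) with hterm
  set S : Fin n → ℝ := fun i => ∑ p ∈ 𝓘.filter (fun p => p.1 = i), term p with hS
  have hD : ∀ i, 0 < dist (x i) (y i) := fun i => dist_pos.2 (hxy i)
  have htermnn : ∀ p, 0 ≤ term p := fun p => dist_nonneg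
  have hSnn : ∀ i, 0 ≤ S i := fun i => Finset.sum_nonneg fun p _ => htermnn p
  -- S i ≤ dist (x i) (y i)
  have hSle : ∀ i, S i ≤ dist (x i) (y i) := by
    intro i
    have hsub : 𝓘.filter (fun p => p.1 = i) ⊆
        Finset.univ.map ⟨Sigma.mk i, sigma_mk_injective⟩ := by
      intro p hp
      obtain ⟨i', j⟩ := p
      have : i' = i := (Finset.mem_filter.1 hp).2
      subst this
      simp
    calc S i ≤ ∑ p ∈ Finset.univ.map ⟨Sigma.mk i, sigma_mk_injective⟩, term p :=
          Finset.sum_le_sum_of_subset_of_nonneg hsub (fun p _ _ => htermnn p)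
      _ = ∑ j : Fin (k i), term ⟨i, j⟩ := Finset.sum_map _ _ _
      _ = dist (x i) (y i) := hupart i
  -- total of S
  have hStot : ∑ i, S i = ∑ p ∈ 𝓘, term p := Finset.sum_fiberwise 𝓘 _ _
  set I : Finset (Fin n) := Finset.univ.filter (fun i => ε / R * dist (x i) (y i) < S i)
    with hI
  have hRpos : (0 : ℝ) < R := lt_of_lt_of_le one_pos hR
  have hεR : 0 < ε / R := div_pos hε hRpos
  -- sum of dists over I is < δ
  have hIsmall : ∑ i ∈ I, |a i| < ε := by
    apply hsmall
    have h1 : ∀ i ∈ I, dist (x i) (y i) ≤ R / ε * S i := by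
      intro i hi
      have := (Finset.mem_filter.1 hi).2
      have h2 : ε / R * dist (x i) (y i) ≤ S i := le_of_lt this
      rw [div_mul_eq_mul_div, div_le_iff₀ hRpos] at h2
      rw [div_mul_eq_mul_div, le_div_iff₀ hε]
      linarith
    calc ∑ i ∈ I, dist (x i) (y i) ≤ ∑ i ∈ I, R / ε * S i := Finset.sum_le_sum h1
      _ = R / ε * ∑ i ∈ I, S i := by rw [Finset.mul_sum]
      _ ≤ R / ε * ∑ i, S i := by
          apply mul_le_mul_of_nonneg_left _ (le_of_lt (div_pos hRpos hε))
          exact Finset.sum_le_sum_of_subset_of_nonneg (Finset.subset_univ I)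
            (fun i _ _ => hSnn i)
      _ < R / ε * (δ * ε / R) := by
          apply mul_lt_mul_of_pos_left _ (div_pos hRpos hε)
          rw [hStot]; exact h𝓘
      _ = δ := by field_simp
  -- rewrite goal fiberwise
  have hgoal : ∑ p ∈ 𝓘, |a p.1| * (term p / dist (x p.1) (y p.1))
      = ∑ i, |a i| * (S i / dist (x i) (y i)) := by
    rw [← Finset.sum_fiberwise 𝓘 (fun p => p.1)
      (fun p => |a p.1| * (term p / dist (x p.1) (y p.1)))]
    refine Finset.sum_congr rfl fun i _ => ?_
    rw [hS, Finset.sum_div, Finset.mul_sum]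
    refine Finset.sum_congr rfl fun p hp => ?_
    have : p.1 = i := (Finset.mem_filter.1 hp).2
    rw [this]
  rw [show (∑ p ∈ 𝓘, |a p.1| * (dist (u p.1 p.2.castSucc) (u p.1 p.2.succ)
      / dist (x p.1) (y p.1))) = ∑ i, |a i| * (S i / dist (x i) (y i)) from hgoal]
  -- split the sum
  have hsplit : ∑ i, |a i| * (S i / dist (x i) (y i))
      = ∑ i ∈ I, |a i| * (S i / dist (x i) (y i))
        + ∑ i ∈ Iᶜ, |a i| * (S i / dist (x i) (y i)) :=
    (Finset.sum_add_sum_compl I _).symm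
  rw [hsplit]
  have hb1 : ∑ i ∈ I, |a i| * (S i / dist (x i) (y i)) < ε := by
    calc ∑ i ∈ I, |a i| * (S i / dist (x i) (y i)) ≤ ∑ i ∈ I, |a i| := by
          refine Finset.sum_le_sum fun i _ => ?_
          have hq : S i / dist (x i) (y i) ≤ 1 :=
            (div_le_one (hD i)).2 (hSle i)
          nlinarith [abs_nonneg (a i), hSnn i, (hD i), div_nonneg (hSnn i) (le_of_lt (hD i))]
      _ < ε := hIsmall
  have hb2 : ∑ i ∈ Iᶜ, |a i| * (S i / dist (x i) (y i)) ≤ ε := by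
    calc ∑ i ∈ Iᶜ, |a i| * (S i / dist (x i) (y i)) ≤ ∑ i ∈ Iᶜ, |a i| * (ε / R) := by
          refine Finset.sum_le_sum fun i hi => ?_
          have hni : ¬ (ε / R * dist (x i) (y i) < S i) := by
            have := Finset.mem_compl.1 hi
            simpa [hI] using this
          have h3 : S i ≤ ε / R * dist (x i) (y i) := le_of_not_gt hni
          have h4 : S i / dist (x i) (y i) ≤ ε / R :=
            (div_le_iff₀ (hD i)).2 (by linarith)
          exact mul_le_mul_of_nonneg_left h4 (abs_nonneg _)
      _ = (∑ i ∈ Iᶜ, |a i|) * (ε / R) := (Finset.sum_mul _ _ _).symm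
      _ ≤ R * (ε / R) := by
          apply mul_le_mul_of_nonneg_right _ (le_of_lt hεR)
          calc ∑ i ∈ Iᶜ, |a i| ≤ ∑ i, |a i| :=
                Finset.sum_le_sum_of_subset_of_nonneg (Finset.subset_univ _)
                  (fun i _ _ => abs_nonneg _)
            _ ≤ R := haR
      _ = ε := by field_simp
  have h4ε : 0 < 4 * ε ^ 2 / R := by positivity
  linarith
end
end

section
/- Let M be a pointed metric space and let (γ_n) be a sequence in the unit sphere of F(M) such that each γ_n admits a convex sum/series representation γ_n = ∑_k λ_k^n m_{x_k^n y_k^n} with ∑_k |λ_k^n| = ‖γ_n‖ = 1. If lim_{n→∞} ∑_k d(x_k^n, y_k^n) = 0, then for every γ ∈ F(M) one has lim_{n→∞} ‖γ + γ_n‖ = ‖γ‖ + 1. -/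
open Metric Set Filter Pointwise

noncomputable section
open MeasureTheory

def Tm (U : Set ℝ) (s : ℝ) : ℝ :=
  (volume (U ∩ Set.Ioc 0 s)).toReal - (volume (U ∩ Set.Ioc s 0)).toReal

lemma Tm_inter_ne_top {U : Set ℝ} (hU : volume U ≠ ⊤) (S : Set ℝ) :
    volume (U ∩ S) ≠ ⊤ :=
  ne_top_of_le_ne_top hU (measure_mono Set.inter_subset_left)

lemma Tm_split {U : Set ℝ} (hU : MeasurableSet U) {a b c : ℝ}
    (hab : a ≤ b) (hbc : b ≤ c) :
    volume (U ∩ Set.Ioc a c) = volume (U ∩ Set.Ioc a b) + volume (U ∩ Set.Ioc b c) := by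
  rw [← Set.Ioc_union_Ioc_eq_Ioc hab hbc, Set.inter_union_distrib_left,
    measure_union ?_ (hU.inter measurableSet_Ioc)]
  refine Disjoint.mono Set.inter_subset_right Set.inter_subset_right ?_
  rw [Set.disjoint_left]
  intro t ht ht'
  exact absurd ht'.1 (not_lt.mpr ht.2)

lemma Tm_sub {U : Set ℝ} (hU : MeasurableSet U) (hfin : volume U ≠ ⊤)
    {a b : ℝ} (hab : a ≤ b) :
    Tm U b - Tm U a = (volume (U ∩ Set.Ioc a b)).toReal := by
  unfold Tm
  rcases le_total 0 a with h0a | ha0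
  · rw [Set.Ioc_eq_empty (not_lt.mpr h0a), Set.Ioc_eq_empty (not_lt.mpr (h0a.trans hab)),
      Tm_split hU h0a hab,
      ENNReal.toReal_add (Tm_inter_ne_top hfin _) (Tm_inter_ne_top hfin _)]
    simp
  · rcases le_total 0 b with h0b | hb0
    · rw [Set.Ioc_eq_empty (not_lt.mpr ha0), Set.Ioc_eq_empty (not_lt.mpr h0b),
        Tm_split hU ha0 h0b,
        ENNReal.toReal_add (Tm_inter_ne_top hfin _) (Tm_inter_ne_top hfin _)]
      simp only [Set.inter_empty, measure_empty, ENNReal.toReal_zero]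
      ring
    · rw [Set.Ioc_eq_empty (not_lt.mpr ha0), Set.Ioc_eq_empty (not_lt.mpr hb0),
        Tm_split hU hab hb0,
        ENNReal.toReal_add (Tm_inter_ne_top hfin _) (Tm_inter_ne_top hfin _)]
      simp only [Set.inter_empty, measure_empty, ENNReal.toReal_zero]
      ring

lemma Tm_sub_nonneg {U : Set ℝ} (hU : MeasurableSet U) (hfin : volume U ≠ ⊤)
    {a b : ℝ} (hab : a ≤ b) : 0 ≤ Tm U b - Tm U a := by
  rw [Tm_sub hU hfin hab]; exact ENNReal.toReal_nonneg

lemma Tm_sub_le {U : Set ℝ} (hU : MeasurableSet U) (hfin : volume U ≠ ⊤)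
    {a b : ℝ} (hab : a ≤ b) : Tm U b - Tm U a ≤ b - a := by
  rw [Tm_sub hU hfin hab]
  calc (volume (U ∩ Set.Ioc a b)).toReal ≤ (volume (Set.Ioc a b)).toReal := by
        refine ENNReal.toReal_mono ?_ (measure_mono Set.inter_subset_right)
        simp [Real.volume_Ioc]
    _ = b - a := by rw [Real.volume_Ioc, ENNReal.toReal_ofReal (by linarith)]

lemma Tm_sub_full {U : Set ℝ} (hU : MeasurableSet U) (hfin : volume U ≠ ⊤)
    {a b : ℝ} (hab : a ≤ b) (hsub : Set.Ioc a b ⊆ U) :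
    Tm U b - Tm U a = b - a := by
  rw [Tm_sub hU hfin hab, Set.inter_eq_self_of_subset_right hsub, Real.volume_Ioc,
    ENNReal.toReal_ofReal (by linarith)]

lemma Tm_zero (U : Set ℝ) : Tm U 0 = 0 := by simp [Tm]

lemma Tm_abs_le {U : Set ℝ} (hU : MeasurableSet U) (hfin : volume U ≠ ⊤) (s : ℝ) :
    |Tm U s| ≤ (volume U).toReal := by
  have hb : ∀ a b : ℝ, a ≤ b → Tm U b - Tm U a ≤ (volume U).toReal := by
    intro a b hab
    rw [Tm_sub hU hfin hab]
    exact ENNReal.toReal_mono hfin (measure_mono Set.inter_subset_left)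
  rcases le_total 0 s with h0s | hs0
  · have h1 := hb 0 s h0s
    have h2 := Tm_sub_nonneg hU hfin h0s
    rw [Tm_zero] at h1 h2
    rw [abs_le]; constructor <;> linarith
  · have h1 := hb s 0 hs0
    have h2 := Tm_sub_nonneg hU hfin hs0
    rw [Tm_zero] at h1 h2
    rw [abs_le]; constructor <;> linarith


/-- if `(γ_n) ⊆ S_{F(M)}` are convex sums/series of molecules
`γ_n = ∑_k λ_k^n m_{x_k^n y_k^n}` with `∑_k |λ_k^n| = ‖γ_n‖ = 1` and
`∑_k d(x_k^n, y_k^n) → 0`, then `‖γ + γ_n‖ → ‖γ‖ + 1` for every `γ ∈ F(M)`. -/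
theorem stmt_15 {M : Type*} [MetricSpace M] (base : M)
    {F : Type*} [NormedAddCommGroup F] [NormedSpace ℝ F] [CompleteSpace F]
    (h : FreeSpaceData M base F)
    (γseq : ℕ → F) (hnorm : ∀ n, ‖γseq n‖ = 1)
    (lam : ℕ → ℕ → ℝ) (x y : ℕ → ℕ → M) (hxy : ∀ n k, x n k ≠ y n k)
    (hrep : ∀ n, HasSum (fun k => lam n k • h.molecule (x n k) (y n k)) (γseq n))
    (hlam : ∀ n, Summable fun k => |lam n k|)
    (hconv : ∀ n, ∑' k, |lam n k| = 1)
    (hdsum : ∀ n, Summable fun k => dist (x n k) (y n k))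
    (hdist : Filter.Tendsto (fun n => ∑' k, dist (x n k) (y n k)) Filter.atTop (nhds 0))
    (γ : F) :
    Filter.Tendsto (fun n => ‖γ + γseq n‖) Filter.atTop (nhds (‖γ‖ + 1)) := by
  have hub : ∀ n, ‖γ + γseq n‖ ≤ ‖γ‖ + 1 := fun n => by
    calc ‖γ + γseq n‖ ≤ ‖γ‖ + ‖γseq n‖ := norm_add_le _ _
      _ = ‖γ‖ + 1 := by rw [hnorm n]
  rw [Metric.tendsto_atTop]
  intro ε hε
  -- functional norming γ
  obtain ⟨ψ, hψn, hψγ⟩ := exists_dual_vector'' ℝ γ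
  -- finite approximation of γ
  have hγcl : γ ∈ closure ((Submodule.span ℝ (Set.range h.toFun) : Submodule ℝ F) : Set F) := by
    have h1 : γ ∈ ((Submodule.span ℝ (Set.range h.toFun)).topologicalClosure : Set F) := by
      rw [h.dense_span]; trivial
    rwa [Submodule.topologicalClosure_coe] at h1
  obtain ⟨γ', hγ'mem, hγ'dist⟩ := Metric.mem_closure_iff.mp hγcl (ε / 8) (by positivity)
  obtain ⟨c, hcrep⟩ := Finsupp.mem_span_range_iff_exists_finsupp.mp hγ'mem
  set A : ℝ := ∑ i ∈ c.support, |c i| with hA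
  have hA0 : 0 ≤ A := Finset.sum_nonneg fun i _ => abs_nonneg _
  -- eventual smallness of the total distance
  have hδpos : (0:ℝ) < ε / (24 * (A + 1)) := by positivity
  obtain ⟨N, hN⟩ := (Metric.tendsto_atTop.mp hdist) (ε / (24 * (A + 1))) hδpos
  refine ⟨N, fun n hn => ?_⟩
  set Δ : ℝ := ∑' k, dist (x n k) (y n k) with hΔ
  have hΔ0 : 0 ≤ Δ := tsum_nonneg fun k => dist_nonneg
  have hΔsmall : Δ < ε / (24 * (A + 1)) := by
    have := hN n hn
    rwa [Real.dist_eq, sub_zero, abs_of_nonneg hΔ0] at this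
  have hAΔ : 6 * A * Δ ≤ ε / 4 := by
    have h1 : 6 * A * Δ ≤ 6 * (A + 1) * Δ := by nlinarith
    have h2 : 6 * (A + 1) * Δ ≤ 6 * (A + 1) * (ε / (24 * (A + 1))) := by nlinarith
    have h3 : 6 * (A + 1) * (ε / (24 * (A + 1))) = ε / 4 := by
      field_simp; ring
    linarith
  -- functional norming γseq n
  obtain ⟨ψn, hψnn, hψng⟩ := exists_dual_vector'' ℝ (γseq n)
  set f : M → ℝ := fun z => ψ (h.toFun z) with hfdef
  set g : M → ℝ := fun z => ψn (h.toFun z) with hgdef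
  have hfz : ∀ z, f z = ψ (h.toFun z) := fun _ => rfl
  have hgz : ∀ z, g z = ψn (h.toFun z) := fun _ => rfl
  set D : M → ℝ := fun z => g z - f z with hDdef
  have hDz : ∀ z, D z = g z - f z := fun _ => rfl
  set dd : ℕ → ℝ := fun k => dist (x n k) (y n k) with hdd
  have hddz : ∀ k, dd k = dist (x n k) (y n k) := fun _ => rfl
  have hddpos : ∀ k, 0 < dd k := fun k => dist_pos.mpr (hxy n k)
  -- Lipschitz bounds for f and g
  have hflip : ∀ a b : M, |f a - f b| ≤ dist a b := by
    intro a b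
    have h1 : f a - f b = ψ (h.toFun a - h.toFun b) := by rw [map_sub]
    rw [h1, ← Real.norm_eq_abs]
    calc ‖ψ (h.toFun a - h.toFun b)‖ ≤ ‖ψ‖ * ‖h.toFun a - h.toFun b‖ := ψ.le_opNorm _
      _ ≤ 1 * dist a b := by
          rw [h.norm_sub]
          exact mul_le_mul_of_nonneg_right hψn dist_nonneg
      _ = dist a b := one_mul _
  have hglip : ∀ a b : M, |g a - g b| ≤ dist a b := by
    intro a b
    have h1 : g a - g b = ψn (h.toFun a - h.toFun b) := by rw [map_sub]
    rw [h1, ← Real.norm_eq_abs]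
    calc ‖ψn (h.toFun a - h.toFun b)‖ ≤ ‖ψn‖ * ‖h.toFun a - h.toFun b‖ := ψn.le_opNorm _
      _ ≤ 1 * dist a b := by
          rw [h.norm_sub]
          exact mul_le_mul_of_nonneg_right hψnn dist_nonneg
      _ = dist a b := one_mul _
  -- the union of windows
  set U : Set ℝ := ⋃ k, Set.Ioo (D (x n k) - 3 * dd k) (D (x n k) + 3 * dd k) with hUdef
  have hUmeas : MeasurableSet U := MeasurableSet.iUnion fun k => measurableSet_Ioo
  have hUvol : volume U ≤ ENNReal.ofReal (6 * Δ) := by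
    calc volume U ≤ ∑' k, volume (Set.Ioo (D (x n k) - 3 * dd k) (D (x n k) + 3 * dd k)) :=
          measure_iUnion_le _
      _ = ∑' k, ENNReal.ofReal (6 * dd k) := by
          congr 1; funext k
          rw [Real.volume_Ioo]
          congr 1; ring
      _ = ENNReal.ofReal (∑' k, 6 * dd k) := by
          rw [ENNReal.ofReal_tsum_of_nonneg (fun k => by positivity) ((hdsum n).mul_left 6)]
      _ = ENNReal.ofReal (6 * Δ) := by rw [← tsum_mul_left]
  have hUfin : volume U ≠ ⊤ :=
    ne_top_of_le_ne_top ENNReal.ofReal_ne_top hUvol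
  have hUvolR : (volume U).toReal ≤ 6 * Δ := by
    calc (volume U).toReal ≤ (ENNReal.ofReal (6 * Δ)).toReal :=
          ENNReal.toReal_mono ENNReal.ofReal_ne_top hUvol
      _ = 6 * Δ := ENNReal.toReal_ofReal (by positivity)
  -- the modified function
  set u : M → ℝ := fun z => f z + Tm U (D z) with hudef
  have huz : ∀ z, u z = f z + Tm U (D z) := fun _ => rfl
  -- u is 1-Lipschitz
  have hud : ∀ a b : M, u a - u b ≤ dist a b := by
    intro a b
    rcases le_total (D b) (D a) with hD | hD
    · have hT := Tm_sub_le hUmeas hUfin hD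
      have hg' : g a - g b ≤ dist a b := le_of_abs_le (hglip a b)
      have h1 := hDz a; have h2 := hDz b
      have : u a - u b = (f a - f b) + (Tm U (D a) - Tm U (D b)) := by
        rw [huz a, huz b]; ring
      rw [this]
      have : (f a - f b) + (D a - D b) = g a - g b := by rw [h1, h2]; ring
      linarith
    · have hT := Tm_sub_nonneg hUmeas hUfin hD
      have hf' : f a - f b ≤ dist a b := le_of_abs_le (hflip a b)
      have : u a - u b = (f a - f b) + (Tm U (D a) - Tm U (D b)) := by
        rw [huz a, huz b]; ring
      linarith
  have hulip : LipschitzWith 1 u := by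
    refine LipschitzWith.of_dist_le_mul fun a b => ?_
    rw [Real.dist_eq, NNReal.coe_one, one_mul]
    rw [abs_le]
    constructor
    · have := hud b a; rw [dist_comm] at this; linarith
    · exact hud a b
  have hubase : u base = 0 := by
    rw [huz, hfz, hDz, hgz, hfz, h.map_base, map_zero, map_zero]
    simp [Tm_zero]
  -- extend u to a functional
  obtain ⟨φ, hφn, hφeq⟩ := h.extend 1 u hulip hubase
  have hφn1 : ‖φ‖ ≤ 1 := by simpa using hφn
  -- pair identity : u gains exactly what g gains on each molecule
  have hpair : ∀ k, u (x n k) - u (y n k) = g (x n k) - g (y n k) := by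
    intro k
    have hdk := hddpos k
    have hDd : |D (x n k) - D (y n k)| ≤ 2 * dd k := by
      have h1 := hglip (x n k) (y n k)
      have h2 := hflip (x n k) (y n k)
      have he : D (x n k) - D (y n k)
          = (g (x n k) - g (y n k)) - (f (x n k) - f (y n k)) := by
        rw [hDz, hDz]; ring
      rw [he, hddz]
      calc |(g (x n k) - g (y n k)) - (f (x n k) - f (y n k))|
          ≤ |g (x n k) - g (y n k)| + |f (x n k) - f (y n k)| := abs_sub _ _
        _ ≤ 2 * dist (x n k) (y n k) := by linarith
    have habs := abs_le.mp hDd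
    have hsub : Set.Ioc (min (D (x n k)) (D (y n k))) (max (D (x n k)) (D (y n k))) ⊆ U := by
      intro t ht
      refine Set.mem_iUnion.mpr ⟨k, ?_⟩
      have hmin : D (x n k) - 2 * dd k ≤ min (D (x n k)) (D (y n k)) :=
        le_min (by linarith) (by linarith)
      have hmax : max (D (x n k)) (D (y n k)) ≤ D (x n k) + 2 * dd k :=
        max_le (by linarith) (by linarith)
      have h1 := ht.1; have h2 := ht.2
      exact ⟨by linarith, by linarith⟩
    rcases le_total (D (y n k)) (D (x n k)) with hle | hle
    · have hmin : min (D (x n k)) (D (y n k)) = D (y n k) := min_eq_right hle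
      have hmax : max (D (x n k)) (D (y n k)) = D (x n k) := max_eq_left hle
      rw [hmin, hmax] at hsub
      have hT := Tm_sub_full hUmeas hUfin hle hsub
      have h1 := hDz (x n k); have h2 := hDz (y n k)
      have : u (x n k) - u (y n k)
          = (f (x n k) - f (y n k)) + (Tm U (D (x n k)) - Tm U (D (y n k))) := by
        rw [huz, huz]; ring
      rw [this, hT, h1, h2]; ring
    · have hmin : min (D (x n k)) (D (y n k)) = D (x n k) := min_eq_left hle
      have hmax : max (D (x n k)) (D (y n k)) = D (y n k) := max_eq_right hle
      rw [hmin, hmax] at hsub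
      have hT := Tm_sub_full hUmeas hUfin hle hsub
      have h1 := hDz (x n k); have h2 := hDz (y n k)
      have : u (x n k) - u (y n k)
          = (f (x n k) - f (y n k)) + (Tm U (D (x n k)) - Tm U (D (y n k))) := by
        rw [huz, huz]; ring
      rw [this, h1, h2]; linarith [hT]
  -- φ (γseq n) = 1
  have hφγn : φ (γseq n) = 1 := by
    have H1 := (hrep n).mapL φ
    have H2 := (hrep n).mapL ψn
    have heq : (fun k => φ (lam n k • h.molecule (x n k) (y n k)))
        = fun k => ψn (lam n k • h.molecule (x n k) (y n k)) := by
      funext k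
      simp only [FreeSpaceData.molecule, _root_.map_smul, map_sub, smul_eq_mul]
      rw [hφeq, hφeq]
      have hp := hpair k
      rw [hgz, hgz] at hp
      rw [hp]
    rw [heq] at H1
    rw [H1.unique H2, hψng, hnorm n]
    simp
  -- estimate φ γ
  have hγ'norm : ‖γ - γ'‖ < ε / 8 := by rwa [← dist_eq_norm]
  have hφγ' : |φ γ' - ψ γ'| ≤ A * (6 * Δ) := by
    have hrepr : γ' = ∑ i ∈ c.support, c i • h.toFun i := by
      rw [← hcrep]; rfl
    have hφsum : φ γ' = ∑ i ∈ c.support, c i * u i := by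
      rw [hrepr, map_sum]
      refine Finset.sum_congr rfl fun i _ => ?_
      rw [_root_.map_smul, smul_eq_mul, hφeq]
    have hψsum : ψ γ' = ∑ i ∈ c.support, c i * f i := by
      rw [hrepr, map_sum]
      refine Finset.sum_congr rfl fun i _ => ?_
      rw [_root_.map_smul, smul_eq_mul, hfz]
    rw [hφsum, hψsum, ← Finset.sum_sub_distrib]
    calc |∑ i ∈ c.support, (c i * u i - c i * f i)|
        ≤ ∑ i ∈ c.support, |c i * u i - c i * f i| := Finset.abs_sum_le_sum_abs _ _
      _ ≤ ∑ i ∈ c.support, |c i| * (6 * Δ) := by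
          refine Finset.sum_le_sum fun i _ => ?_
          have : c i * u i - c i * f i = c i * Tm U (D i) := by
            rw [huz]; ring
          rw [this, abs_mul]
          refine mul_le_mul_of_nonneg_left ?_ (abs_nonneg _)
          exact (Tm_abs_le hUmeas hUfin _).trans hUvolR
      _ = A * (6 * Δ) := by rw [← Finset.sum_mul]
  have hφγ : ψ γ - (ε / 4 + ε / 4) ≤ φ γ := by
    have h1 : |φ (γ - γ')| ≤ ‖γ - γ'‖ := by
      rw [← Real.norm_eq_abs]
      calc ‖φ (γ - γ')‖ ≤ ‖φ‖ * ‖γ - γ'‖ := φ.le_opNorm _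
        _ ≤ 1 * ‖γ - γ'‖ := mul_le_mul_of_nonneg_right hφn1 (norm_nonneg _)
        _ = ‖γ - γ'‖ := one_mul _
    have h2 : |ψ (γ - γ')| ≤ ‖γ - γ'‖ := by
      rw [← Real.norm_eq_abs]
      calc ‖ψ (γ - γ')‖ ≤ ‖ψ‖ * ‖γ - γ'‖ := ψ.le_opNorm _
        _ ≤ 1 * ‖γ - γ'‖ := mul_le_mul_of_nonneg_right hψn (norm_nonneg _)
        _ = ‖γ - γ'‖ := one_mul _
    have h3 : φ (γ - γ') = φ γ - φ γ' := map_sub _ _ _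
    have h4 : ψ (γ - γ') = ψ γ - ψ γ' := map_sub _ _ _
    rw [h3] at h1; rw [h4] at h2
    have h5 := abs_le.mp h1
    have h6 := abs_le.mp h2
    have h7 := abs_le.mp hφγ'
    have h8 : A * (6 * Δ) ≤ ε / 4 := by linarith [hAΔ]
    have h9 : ‖γ - γ'‖ ≤ ε / 8 := le_of_lt hγ'norm
    linarith
  -- conclude
  have hlower : ‖γ‖ + 1 - ε / 2 ≤ ‖γ + γseq n‖ := by
    have h1 : φ (γ + γseq n) ≤ ‖γ + γseq n‖ := by
      calc φ (γ + γseq n) ≤ |φ (γ + γseq n)| := le_abs_self _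
        _ ≤ ‖γ + γseq n‖ := by
            rw [← Real.norm_eq_abs]
            calc ‖φ (γ + γseq n)‖ ≤ ‖φ‖ * ‖γ + γseq n‖ := φ.le_opNorm _
              _ ≤ 1 * ‖γ + γseq n‖ := mul_le_mul_of_nonneg_right hφn1 (norm_nonneg _)
              _ = ‖γ + γseq n‖ := one_mul _
    have h2 : φ (γ + γseq n) = φ γ + 1 := by rw [map_add, hφγn]
    have h3 : (ψ γ : ℝ) = ‖γ‖ := by simpa using hψγ
    linarith
  rw [Real.dist_eq]
  have : |‖γ + γseq n‖ - (‖γ‖ + 1)| ≤ ε / 2 := by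
    rw [abs_le]
    constructor
    · linarith
    · linarith [hub n]
  linarith
end
end

section
/- Let M be a complete pointed metric space and let K ⊆ F(M) be bounded. Then the following are equivalent: (i) K is relatively norm-compact; (ii) there exists c ≥ 1 such that for every ε > 0 there exist δ > 0 and a compact set C ⊆ M such that for every μ ∈ K there is a family of reals (a_{(x,y)}) indexed by the ordered pairs (x,y) of distinct points of C with ∑_{(x,y)} |a_{(x,y)}| < ∞, ‖∑_{(x,y)} a_{(x,y)} m_{xy} − μ‖ < ε, ∑_{(x,y)} |a_{(x,y)}| ≤ c‖μ‖, and ∑_{(x,y) : d(x,y) < δ} |a_{(x,y)}| < ε. -/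
open Metric Set Filter Pointwise

noncomputable section

section Aux

variable {M : Type*} [MetricSpace M] {base : M}
  {F : Type*} [NormedAddCommGroup F] [NormedSpace ℝ F]

lemma FreeSpaceData.norm_molecule_le (h : FreeSpaceData M base F) (x y : M) :
    ‖h.molecule x y‖ ≤ 1 := by
  by_cases hxy : x = y
  · simp [FreeSpaceData.molecule, hxy]
  · have hd : dist x y ≠ 0 := dist_ne_zero.2 hxy
    rw [FreeSpaceData.molecule, norm_smul, h.norm_sub, Real.norm_eq_abs,
      abs_inv, abs_of_nonneg dist_nonneg, inv_mul_cancel₀ hd]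

lemma FreeSpaceData.dense_span' (h : FreeSpaceData M base F) :
    Dense (Submodule.span ℝ (Set.range h.toFun) : Set F) :=
  Submodule.dense_iff_topologicalClosure_eq_top.2 h.dense_span

lemma FreeSpaceData.opNorm_le (h : FreeSpaceData M base F) (φ : F →L[ℝ] ℝ) {L : ℝ}
    (hL : 0 ≤ L) (hm : ∀ x y : M, x ≠ y → |φ (h.molecule x y)| ≤ L) : ‖φ‖ ≤ L := by
  have lip : LipschitzWith L.toNNReal (fun x => φ (h.toFun x)) := by
    apply LipschitzWith.of_dist_le_mul
    intro x y
    rcases eq_or_ne x y with rfl | hxy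
    · simp
    · have hd : dist x y ≠ 0 := dist_ne_zero.2 hxy
      have key : h.toFun x - h.toFun y = dist x y • h.molecule x y := by
        rw [FreeSpaceData.molecule, smul_inv_smul₀ hd]
      rw [Real.dist_eq, ← map_sub, key, map_smul, smul_eq_mul, abs_mul,
        abs_of_nonneg dist_nonneg, Real.coe_toNNReal _ hL, mul_comm]
      exact mul_le_mul_of_nonneg_right (hm x y hxy) dist_nonneg
  obtain ⟨ψ, hψ, hψx⟩ := h.extend L.toNNReal _ lip (by simp [h.map_base])
  have : ψ = φ := by
    apply ContinuousLinearMap.ext_on h.dense_span'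
    rintro _ ⟨x, rfl⟩
    exact hψx x
  rw [← this]
  exact hψ.trans_eq (Real.coe_toNNReal _ hL)

/-- The set of finite absolutely-convex combinations of molecules with total mass `≤ r`. -/
def FreeSpaceData.Dset (h : FreeSpaceData M base F) (r : ℝ) : Set F :=
  {v | ∃ (s : Finset (M × M)) (b : M × M → ℝ), (∀ p ∈ s, p.1 ≠ p.2) ∧
    (∑ p ∈ s, |b p|) ≤ r ∧ v = ∑ p ∈ s, b p • h.molecule p.1 p.2}

lemma FreeSpaceData.zero_mem_Dset (h : FreeSpaceData M base F) {r : ℝ} (hr : 0 ≤ r) :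
    (0 : F) ∈ h.Dset r := ⟨∅, 0, by simp, by simpa using hr, by simp⟩

lemma FreeSpaceData.convex_Dset (h : FreeSpaceData M base F) (r : ℝ) :
    Convex ℝ (h.Dset r) := by
  classical
  rintro v₁ ⟨s₁, b₁, hs₁, hb₁, rfl⟩ v₂ ⟨s₂, b₂, hs₂, hb₂, rfl⟩ t₁ t₂ ht₁ ht₂ hts
  set c₁ : M × M → ℝ := fun p => if p ∈ s₁ then b₁ p else 0 with hc₁
  set c₂ : M × M → ℝ := fun p => if p ∈ s₂ then b₂ p else 0 with hc₂
  refine ⟨s₁ ∪ s₂, fun p => t₁ * c₁ p + t₂ * c₂ p, ?_, ?_, ?_⟩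
  · intro p hp
    rcases Finset.mem_union.1 hp with hp | hp
    exacts [hs₁ p hp, hs₂ p hp]
  · calc ∑ p ∈ s₁ ∪ s₂, |t₁ * c₁ p + t₂ * c₂ p|
        ≤ ∑ p ∈ s₁ ∪ s₂, (t₁ * |c₁ p| + t₂ * |c₂ p|) := by
          refine Finset.sum_le_sum fun p _ => ?_
          refine (abs_add_le _ _).trans ?_
          rw [abs_mul, abs_mul, abs_of_nonneg ht₁, abs_of_nonneg ht₂]
      _ = t₁ * (∑ p ∈ s₁ ∪ s₂, |c₁ p|) + t₂ * (∑ p ∈ s₁ ∪ s₂, |c₂ p|) := by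
          rw [Finset.sum_add_distrib, Finset.mul_sum, Finset.mul_sum]
      _ = t₁ * (∑ p ∈ s₁, |b₁ p|) + t₂ * (∑ p ∈ s₂, |b₂ p|) := by
          rw [← Finset.sum_subset Finset.subset_union_left
              (fun p _ hp => by simp [hc₁, hp]),
            ← Finset.sum_subset Finset.subset_union_right
              (fun p _ hp => by simp [hc₂, hp])]
          simp only [hc₁, hc₂]
          congr 1
          · congr 1; exact Finset.sum_congr rfl fun p hp => by simp [hp]
          · congr 1; exact Finset.sum_congr rfl fun p hp => by simp [hp]
      _ ≤ t₁ * r + t₂ * r := by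
          gcongr
      _ = r := by rw [← add_mul, hts, one_mul]
  · simp only [add_smul, mul_smul, Finset.sum_add_distrib, ← Finset.smul_sum]
    congr 1
    · congr 1
      rw [← Finset.sum_subset Finset.subset_union_left
          (fun p _ hp => by simp [hc₁, hp])]
      exact Finset.sum_congr rfl fun p hp => by simp [hc₁, hp]
    · congr 1
      rw [← Finset.sum_subset Finset.subset_union_right
          (fun p _ hp => by simp [hc₂, hp])]
      exact Finset.sum_congr rfl fun p hp => by simp [hc₂, hp]

lemma FreeSpaceData.mem_closure_Dset (h : FreeSpaceData M base F) {μ : F} {r : ℝ}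
    (hμ : ‖μ‖ < r) : μ ∈ closure (h.Dset r) := by
  have hr : 0 < r := lt_of_le_of_lt (norm_nonneg μ) hμ
  by_contra hcl
  obtain ⟨φ, u, hu₁, hu₂⟩ := geometric_hahn_banach_closed_point
    ((h.convex_Dset r).closure) isClosed_closure hcl
  have h0 : (0:ℝ) < u := by
    have := hu₁ 0 (subset_closure (h.zero_mem_Dset hr.le))
    rwa [map_zero] at this
  have hmol : ∀ x y : M, x ≠ y → |φ (h.molecule x y)| ≤ u / r := by
    intro x y hxy
    have hmem : ∀ t : ℝ, |t| ≤ r → t • h.molecule x y ∈ h.Dset r := by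
      intro t ht
      refine ⟨{(x, y)}, fun _ => t, by simpa using hxy, by simpa using ht, by simp⟩
    have h1 : φ (r • h.molecule x y) < u :=
      hu₁ _ (subset_closure (hmem r (by rw [abs_of_pos hr])))
    have h2 : φ ((-r) • h.molecule x y) < u :=
      hu₁ _ (subset_closure (hmem (-r) (by rw [abs_neg, abs_of_pos hr])))
    rw [map_smul, smul_eq_mul] at h1 h2
    rw [abs_le]
    constructor
    · rw [neg_le]
      exact (le_div_iff₀ hr).2 (by nlinarith)
    · exact (le_div_iff₀ hr).2 (by nlinarith)
  have hnorm : ‖φ‖ ≤ u / r := h.opNorm_le φ (div_nonneg h0.le hr.le) hmol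
  have : φ μ ≤ ‖φ‖ * ‖μ‖ := le_trans (le_abs_self _) (φ.le_opNorm μ)
  have hlt : φ μ < u := by
    calc φ μ ≤ ‖φ‖ * ‖μ‖ := this
      _ ≤ (u / r) * ‖μ‖ := by gcongr
      _ < (u / r) * r := mul_lt_mul_of_pos_left hμ (by positivity)
      _ = u := div_mul_cancel₀ u hr.ne'
  exact absurd hu₂ hlt.asymm


lemma sum_smul_mem_convexHull {ι : Type*} {S : Set F} {r : ℝ} (hr : 0 < r) (h0 : (0:F) ∈ S)
    {b : ι → ℝ} {v : ι → F} (hS : ∀ i, b i ≠ 0 → r • v i ∈ S ∧ -(r • v i) ∈ S)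
    (t : Finset ι) (hbt : (∑ i ∈ t, |b i|) ≤ r) :
    (∑ i ∈ t, b i • v i) ∈ convexHull ℝ S := by
  classical
  set z : ι → F := fun i => if b i = 0 then 0 else ((r * b i) / |b i|) • v i with hz
  set w : Option ι → ℝ := fun o => o.elim (r - ∑ i ∈ t, |b i|) (fun i => |b i|) with hwdef
  set z' : Option ι → F := fun o => o.elim 0 z with hz'
  set t' : Finset (Option ι) := insert none (t.map ⟨some, Option.some_injective ι⟩) with ht'
  have hnone : (none : Option ι) ∉ t.map ⟨some, Option.some_injective ι⟩ := by simp
  have hws : ∑ o ∈ t', w o = r := by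
    rw [ht', Finset.sum_insert hnone, Finset.sum_map]
    simp [hwdef]
  have hzmem : ∀ o ∈ t', z' o ∈ S := by
    rintro (_ | i) _
    · exact h0
    · simp only [hz', Option.elim, hz]
      split_ifs with hb
      · exact h0
      · rcases lt_or_gt_of_ne hb with hneg | hpos
        · have : (r * b i) / |b i| = -r := by
            rw [abs_of_neg hneg, div_neg, mul_div_assoc, div_self hb, mul_one]
          rw [this, neg_smul]
          exact (hS i hb).2
        · have : (r * b i) / |b i| = r := by
            rw [abs_of_pos hpos]; field_simp
          rw [this]; exact (hS i hb).1
  have key : t'.centerMass w z' = ∑ i ∈ t, b i • v i := by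
    rw [Finset.centerMass, hws, ht', Finset.sum_insert hnone, Finset.sum_map]
    simp only [Function.Embedding.coeFn_mk]
    have : ∀ i ∈ t, w (some i) • z' (some i) = (r * b i) • v i := by
      intro i _
      simp only [hwdef, hz', Option.elim, hz]
      split_ifs with hb
      · simp [hb]
      · rw [smul_smul]
        congr 1
        field_simp
    rw [Finset.sum_congr rfl this]
    simp only [hwdef, hz', Option.elim, smul_zero, zero_add]
    rw [Finset.smul_sum]
    refine Finset.sum_congr rfl fun i _ => ?_
    rw [smul_smul, ← mul_assoc, inv_mul_cancel₀ hr.ne', one_mul]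
  rw [← key]
  refine Finset.centerMass_mem_convexHull t' ?_ (by rw [hws]; exact hr) hzmem
  rintro (_ | i) _
  · exact sub_nonneg.2 hbt
  · exact abs_nonneg _

lemma mem_closure_convexHull_of_hasSum {ι : Type*} {S : Set F} {r : ℝ} (hr : 0 < r)
    (h0 : (0:F) ∈ S) {b : ι → ℝ} {v : ι → F}
    (hS : ∀ i, b i ≠ 0 → r • v i ∈ S ∧ -(r • v i) ∈ S)
    (hb : Summable fun i => |b i|) (hbr : (∑' i, |b i|) ≤ r) {w : F}
    (hw : HasSum (fun i => b i • v i) w) : w ∈ closure (convexHull ℝ S) :=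
  mem_closure_of_tendsto hw (Filter.Eventually.of_forall fun t =>
    sum_smul_mem_convexHull hr h0 hS t
      ((Summable.sum_le_tsum t (fun i _ => abs_nonneg _) hb).trans hbr))

end Aux
/-- characterization of relatively norm-compact subsets of `F(M)` via
approximation by absolutely convergent combinations of "large" molecules with endpoints
in a compact set. -/
theorem stmt_19 {M : Type*} [MetricSpace M] [CompleteSpace M] (base : M)
    {F : Type*} [NormedAddCommGroup F] [NormedSpace ℝ F] [CompleteSpace F]
    (h : FreeSpaceData M base F) (K : Set F) (hK : Bornology.IsBounded K) :
    IsCompact (closure K) ↔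
      ∃ c : ℝ, 1 ≤ c ∧ ∀ ε : ℝ, 0 < ε → ∃ δ : ℝ, 0 < δ ∧ ∃ C : Set M, IsCompact C ∧
        ∀ μ ∈ K, ∃ a : {p : M × M // p.1 ∈ C ∧ p.2 ∈ C ∧ p.1 ≠ p.2} → ℝ,
          Summable (fun p => |a p|) ∧
          (∃ ν : F, HasSum (fun p => a p • h.molecule p.1.1 p.1.2) ν ∧ ‖ν - μ‖ < ε) ∧
          (∑' p, |a p|) ≤ c * ‖μ‖ ∧
          (∑' p : {p : M × M // p.1 ∈ C ∧ p.2 ∈ C ∧ p.1 ≠ p.2},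
            if dist p.1.1 p.1.2 < δ then |a p| else 0) < ε := by
  classical
  constructor
  · intro hcomp
    refine ⟨3, by norm_num, fun ε hε => ?_⟩
    have htb : TotallyBounded K := hcomp.totallyBounded.subset subset_closure
    obtain ⟨t, htfin, htsub⟩ := Metric.totallyBounded_iff.1 htb (ε/3) (by positivity)
    have Hy : ∀ y : F, ∃ sb : Finset (M × M) × (M × M → ℝ),
        (∀ p ∈ sb.1, p.1 ≠ p.2) ∧
        (∑ p ∈ sb.1, |sb.2 p|) ≤ ‖y‖ + ε/3 ∧
        dist y (∑ p ∈ sb.1, sb.2 p • h.molecule p.1 p.2) < ε/3 := by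
      intro y
      have hmem := h.mem_closure_Dset (μ := y) (r := ‖y‖ + ε/3) (by linarith)
      rw [Metric.mem_closure_iff] at hmem
      obtain ⟨d, hd, hdist⟩ := hmem (ε/3) (by positivity)
      obtain ⟨s, b, h1, h2, rfl⟩ := hd
      exact ⟨(s, b), h1, h2, hdist⟩
    choose sb hsb1 hsb2 hsb3 using Hy
    set tF : Finset F := htfin.toFinset with htF
    set P : Finset (M × M) := tF.biUnion (fun y => (sb y).1) with hP
    set C : Set M := ↑(P.image Prod.fst ∪ P.image Prod.snd) with hC
    have hPne : ∀ p ∈ P, p.1 ≠ p.2 := by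
      intro p hp
      obtain ⟨y, _, hy⟩ := Finset.mem_biUnion.1 hp
      exact hsb1 y p hy
    have hδne : (insert (1:ℝ) (P.image fun p => dist p.1 p.2)).Nonempty :=
      ⟨1, Finset.mem_insert_self _ _⟩
    set δ : ℝ := (insert (1:ℝ) (P.image fun p => dist p.1 p.2)).min' hδne with hδ
    have hδpos : 0 < δ := by
      rw [hδ, Finset.lt_min'_iff]
      intro b hb
      rcases Finset.mem_insert.1 hb with rfl | hb
      · norm_num
      · obtain ⟨p, hp, rfl⟩ := Finset.mem_image.1 hb
        exact dist_pos.2 (hPne p hp)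
    have hδle : ∀ p ∈ P, δ ≤ dist p.1 p.2 := fun p hp =>
      Finset.min'_le _ _ (Finset.mem_insert_of_mem (Finset.mem_image_of_mem _ hp))
    refine ⟨δ, hδpos, C, (Finset.finite_toSet _).isCompact, fun μ hμ => ?_⟩
    by_cases hsmall : ‖μ‖ ≤ ε/2
    · refine ⟨0, by simpa using summable_zero, ⟨0, by simpa using hasSum_zero, ?_⟩, ?_, ?_⟩
      · rw [zero_sub, norm_neg]; linarith
      · simpa using by positivity
      · simpa using hε
    · push_neg at hsmall
      obtain ⟨y, hyt, hyb⟩ := Set.mem_iUnion₂.1 (htsub hμ)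
      rw [Metric.mem_ball] at hyb
      have hyF : y ∈ tF := htfin.mem_toFinset.2 hyt
      have hs0P : (sb y).1 ⊆ P := fun p hp => Finset.mem_biUnion.2 ⟨y, hyF, hp⟩
      have hmemC : ∀ p ∈ (sb y).1, p.1 ∈ C ∧ p.2 ∈ C ∧ p.1 ≠ p.2 := by
        intro p hp
        refine ⟨?_, ?_, hPne p (hs0P hp)⟩
        · exact Finset.mem_coe.2 (Finset.mem_union_left _
            (Finset.mem_image_of_mem _ (hs0P hp)))
        · exact Finset.mem_coe.2 (Finset.mem_union_right _
            (Finset.mem_image_of_mem _ (hs0P hp)))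
      set g : M × M → ℝ := fun p => if p ∈ (sb y).1 then (sb y).2 p else 0 with hg
      set a : {p : M × M // p.1 ∈ C ∧ p.2 ∈ C ∧ p.1 ≠ p.2} → ℝ := fun q => g q.1 with ha
      set tFq : Finset {p : M × M // p.1 ∈ C ∧ p.2 ∈ C ∧ p.1 ≠ p.2} :=
        (sb y).1.subtype _ with htFq
      have hnotin : ∀ q, q ∉ tFq → a q = 0 := by
        intro q hq
        rw [htFq, Finset.mem_subtype] at hq
        simp [ha, hg, hq]
      have hsum_eq : (∑ q ∈ tFq, a q • h.molecule q.1.1 q.1.2)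
          = ∑ p ∈ (sb y).1, (sb y).2 p • h.molecule p.1 p.2 := by
        rw [htFq]
        simp only [ha]
        rw [Finset.sum_subtype_eq_sum_filter (fun p => g p • h.molecule p.1 p.2),
          Finset.filter_true_of_mem hmemC]
        refine Finset.sum_congr rfl fun p hp => ?_
        simp [hg, hp]
      refine ⟨a, ?_, ⟨∑ q ∈ tFq, a q • h.molecule q.1.1 q.1.2, ?_, ?_⟩, ?_, ?_⟩
      · exact summable_of_ne_finset_zero (s := tFq) fun q hq => by rw [hnotin q hq, abs_zero]
      · exact hasSum_sum_of_ne_finset_zero fun q hq => by rw [hnotin q hq, zero_smul]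
      · rw [hsum_eq]
        have h1 : dist y (∑ p ∈ (sb y).1, (sb y).2 p • h.molecule p.1 p.2) < ε/3 := hsb3 y
        have h2 : dist (∑ p ∈ (sb y).1, (sb y).2 p • h.molecule p.1 p.2) μ
            ≤ dist _ y + dist y μ := dist_triangle _ _ _
        rw [← dist_eq_norm]
        calc dist (∑ p ∈ (sb y).1, (sb y).2 p • h.molecule p.1 p.2) μ
            ≤ dist _ y + dist y μ := h2
          _ < ε/3 + ε/3 := by
              rw [dist_comm _ y, dist_comm y μ]
              exact add_lt_add h1 hyb
          _ < ε := by linarith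
      · have heq : (∑' q, |a q|) = ∑ q ∈ tFq, |a q| :=
          tsum_eq_sum fun q hq => by rw [hnotin q hq, abs_zero]
        have heq2 : (∑ q ∈ tFq, |a q|) = ∑ p ∈ (sb y).1, |(sb y).2 p| := by
          rw [htFq]
          simp only [ha]
          rw [Finset.sum_subtype_eq_sum_filter (fun p => |g p|),
            Finset.filter_true_of_mem hmemC]
          refine Finset.sum_congr rfl fun p hp => ?_
          simp [hg, hp]
        have hynorm : ‖y‖ ≤ ‖μ‖ + ε/3 := by
          have : ‖y‖ ≤ ‖μ‖ + ‖μ - y‖ := by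
            have := norm_sub_norm_le (μ - y) μ
            have h' := norm_add_le (μ - y) (y - μ + y)
            nlinarith [norm_sub_norm_le μ y, abs_norm_sub_norm_le μ y,
              abs_le.1 (abs_norm_sub_norm_le μ y)]
          rw [← dist_eq_norm] at this
          linarith
        rw [heq, heq2]
        calc ∑ p ∈ (sb y).1, |(sb y).2 p| ≤ ‖y‖ + ε/3 := hsb2 y
          _ ≤ ‖μ‖ + ε/3 + ε/3 := by linarith
          _ ≤ 3 * ‖μ‖ := by linarith
      · have hzero : ∀ q : {p : M × M // p.1 ∈ C ∧ p.2 ∈ C ∧ p.1 ≠ p.2},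
            (if dist q.1.1 q.1.2 < δ then |a q| else 0) = 0 := by
          intro q
          split_ifs with hd
          · by_cases hq : q.1 ∈ (sb y).1
            · exact absurd hd (not_lt.2 (hδle _ (hs0P hq)))
            · simp [ha, hg, hq]
          · rfl
        calc (∑' q, if dist q.1.1 q.1.2 < δ then |a q| else 0)
            = ∑' (_ : {p : M × M // p.1 ∈ C ∧ p.2 ∈ C ∧ p.1 ≠ p.2}), (0:ℝ) :=
              tsum_congr hzero
          _ = 0 := tsum_zero
          _ < ε := hε
  · rintro ⟨c, hc1, hc⟩
    obtain ⟨R0, hR0⟩ := isBounded_iff_forall_norm_le.1 hK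
    set R : ℝ := max R0 0 with hRdef
    have hR : ∀ μ ∈ K, ‖μ‖ ≤ R := fun μ hμ => (hR0 μ hμ).trans (le_max_left _ _)
    have hRnn : 0 ≤ R := le_max_right _ _
    set r : ℝ := c * R + 1 with hrdef
    have hr0 : 0 < r := by nlinarith
    have htb : TotallyBounded K := by
      rw [Metric.totallyBounded_iff]
      intro ε hε
      obtain ⟨δ, hδpos, C, hCcomp, happ⟩ := hc (ε/8) (by positivity)
      set P : Set (M × M) := (C ×ˢ C) ∩ {p : M × M | δ ≤ dist p.1 p.2} with hPdef
      have hPcomp : IsCompact P := (hCcomp.prod hCcomp).inter_right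
        (isClosed_le continuous_const continuous_dist)
      have htf : Continuous h.toFun := (Isometry.of_dist_eq fun x y => by
        rw [dist_eq_norm, h.norm_sub]).continuous
      have hcont : ContinuousOn (fun p : M × M => h.molecule p.1 p.2) P := by
        have hne : ∀ p ∈ P, dist p.1 p.2 ≠ 0 := fun p hp => (hδpos.trans_le hp.2).ne'
        exact (continuous_dist.continuousOn.inv₀ hne).smul
          ((htf.comp continuous_fst).sub (htf.comp continuous_snd)).continuousOn
      set S' : Set F := (fun p : M × M => r • h.molecule p.1 p.2) '' P ∪
        (fun p : M × M => -(r • h.molecule p.1 p.2)) '' P ∪ {0} with hS'def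
      have hS'comp : IsCompact S' :=
        ((hPcomp.image_of_continuousOn (hcont.const_smul r)).union
          (hPcomp.image_of_continuousOn (hcont.const_smul r).neg)).union
          isCompact_singleton
      have hTtb : TotallyBounded (closure (convexHull ℝ S')) :=
        (totallyBounded_convexHull.2 hS'comp.totallyBounded).closure
      obtain ⟨u, hufin, husub⟩ := Metric.totallyBounded_iff.1 hTtb (ε/2) (by positivity)
      refine ⟨u, hufin, fun μ hμ => ?_⟩
      obtain ⟨co, hasumm, ⟨ν, hν, hνμ⟩, hmass, hsmallsum⟩ := happ μ hμ
      set bound : {p : M × M // p.1 ∈ C ∧ p.2 ∈ C ∧ p.1 ≠ p.2} → ℝ := fun q => if dist q.1.1 q.1.2 < δ then |co q| else 0 with hbdef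
      have hbound_nonneg : ∀ q, 0 ≤ bound q := by
        intro q; rw [hbdef]; dsimp only; split_ifs; exacts [abs_nonneg _, le_refl _]
      have hbound_le : ∀ q, bound q ≤ |co q| := by
        intro q; rw [hbdef]; dsimp only; split_ifs; exacts [le_refl _, abs_nonneg _]
      have hbound_summable : Summable bound :=
        Summable.of_nonneg_of_le hbound_nonneg hbound_le hasumm
      set gS : {p : M × M // p.1 ∈ C ∧ p.2 ∈ C ∧ p.1 ≠ p.2} → F := fun q => if dist q.1.1 q.1.2 < δ then co q • h.molecule q.1.1 q.1.2
        else 0 with hgSdef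
      have hgS_norm : ∀ q, ‖gS q‖ ≤ bound q := by
        intro q
        rw [hgSdef, hbdef]
        dsimp only
        split_ifs
        · rw [norm_smul, Real.norm_eq_abs]
          exact mul_le_of_le_one_right (abs_nonneg _) (h.norm_molecule_le _ _)
        · simp
      have hgSsum : Summable gS := Summable.of_norm_bounded hbound_summable hgS_norm
      have hνS : HasSum gS (∑' q, gS q) := hgSsum.hasSum
      have hνSnorm : ‖∑' q, gS q‖ < ε/8 := by
        calc ‖∑' q, gS q‖ ≤ ∑' q, ‖gS q‖ := norm_tsum_le_tsum_norm
              (Summable.of_nonneg_of_le (fun q => norm_nonneg _) hgS_norm hbound_summable)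
          _ ≤ ∑' q, bound q := Summable.tsum_le_tsum hgS_norm
              (Summable.of_nonneg_of_le (fun q => norm_nonneg _) hgS_norm hbound_summable)
              hbound_summable
          _ < ε/8 := hsmallsum
      set aB : {p : M × M // p.1 ∈ C ∧ p.2 ∈ C ∧ p.1 ≠ p.2} → ℝ := fun q => if dist q.1.1 q.1.2 < δ then 0 else co q with haBdef
      have hB : HasSum (fun q => aB q • h.molecule q.1.1 q.1.2) (ν - ∑' q, gS q) := by
        have heq : (fun q : {p : M × M // p.1 ∈ C ∧ p.2 ∈ C ∧ p.1 ≠ p.2} => aB q • h.molecule q.1.1 q.1.2)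
            = fun q => (co q • h.molecule q.1.1 q.1.2) - gS q := by
          funext q
          rw [haBdef, hgSdef]
          dsimp only
          split_ifs
          · rw [zero_smul, sub_self]
          · rw [sub_zero]
        rw [heq]
        exact hν.sub hνS
      have haB_le : ∀ q, |aB q| ≤ |co q| := by
        intro q; rw [haBdef]; dsimp only; split_ifs
        · simp
        · exact le_refl _
      have haBsumm : Summable fun q => |aB q| :=
        Summable.of_nonneg_of_le (fun q => abs_nonneg _) haB_le hasumm
      have haBr : (∑' q, |aB q|) ≤ r := by
        calc (∑' q, |aB q|) ≤ ∑' q, |co q| := Summable.tsum_le_tsum haB_le haBsumm hasumm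
          _ ≤ c * ‖μ‖ := hmass
          _ ≤ c * R := mul_le_mul_of_nonneg_left (hR μ hμ) (by linarith)
          _ ≤ r := by rw [hrdef]; linarith
      have hSmem : ∀ q : {p : M × M // p.1 ∈ C ∧ p.2 ∈ C ∧ p.1 ≠ p.2}, aB q ≠ 0 → r • h.molecule q.1.1 q.1.2 ∈ S' ∧
          -(r • h.molecule q.1.1 q.1.2) ∈ S' := by
        intro q hq
        have hd : ¬ dist q.1.1 q.1.2 < δ := by
          intro hd; rw [haBdef] at hq; simp [hd] at hq
        have hqP : (q.1 : M × M) ∈ P := ⟨Set.mem_prod.2 ⟨q.2.1, q.2.2.1⟩, not_lt.1 hd⟩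
        rw [hS'def]
        exact ⟨Or.inl (Or.inl ⟨q.1, hqP, rfl⟩), Or.inl (Or.inr ⟨q.1, hqP, rfl⟩)⟩
      have hνB : ν - (∑' q, gS q) ∈ closure (convexHull ℝ S') :=
        mem_closure_convexHull_of_hasSum hr0 (by rw [hS'def]; exact Or.inr rfl) hSmem haBsumm haBr hB
      obtain ⟨z, hzu, hzb⟩ := Set.mem_iUnion₂.1 (husub hνB)
      refine Set.mem_iUnion₂.2 ⟨z, hzu, Metric.mem_ball.2 ?_⟩
      have h1 : dist μ (ν - ∑' q, gS q) < ε/4 := by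
        rw [dist_eq_norm]
        calc ‖μ - (ν - ∑' q, gS q)‖ = ‖(μ - ν) + ∑' q, gS q‖ := by
              rw [show μ - (ν - ∑' q, gS q) = (μ - ν) + ∑' q, gS q from by abel]
          _ ≤ ‖μ - ν‖ + ‖∑' q, gS q‖ := norm_add_le _ _
          _ < ε/8 + ε/8 := add_lt_add (by rw [← norm_neg, neg_sub]; exact hνμ) hνSnorm
          _ = ε/4 := by ring
      calc dist μ z ≤ dist μ (ν - ∑' q, gS q) + dist (ν - ∑' q, gS q) z :=
            dist_triangle _ _ _
        _ < ε/4 + ε/2 := add_lt_add h1 (Metric.mem_ball.1 hzb)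
        _ < ε := by linarith
    exact TotallyBounded.isCompact_of_isClosed htb.closure isClosed_closure
end
end
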